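/- arXiv:2411.04452 — 3 statements merged into one kernel-verified Lean document; each statement's English description precedes it below -/
import Mathlib

section
/- Suppose ρ★ ∈ ℂ^{D×D} is Hermitian positive semidefinite with rank(ρ★) ≤ r, and the measurement map 𝒜 satisfies the (2r, δ)-RIP with δ ≤ 0.09. Let ŷ ∈ ℝ^K and e_k = ŷ_k − trace(A_k ρ★). If U ∈ ℂ^{D×r} is a critical point, i.e., G(U) = 0, and ‖U U^H − ρ★‖_F > h(δ)·(D√r/K)·‖𝒜*(e)‖, then U is a strict saddle point: there exists Δ ∈ ℂ^{D×r} such that the Wirtinger Hessian quadratic form satisfies H_U(Δ) < 0. -/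
open Matrix
open scoped BigOperators ComplexOrder

/-- Frobenius norm of a complex matrix. -/
noncomputable def frobNorm {m n : ℕ} (A : Matrix (Fin m) (Fin n) ℂ) : ℝ :=
  Real.sqrt (∑ i, ∑ j, ‖A i j‖ ^ 2)

/-- Spectral norm (largest singular value) of a complex matrix, as the operator
norm of the induced map between Euclidean spaces. -/
noncomputable def specNorm {m n : ℕ} (A : Matrix (Fin m) (Fin n) ℂ) : ℝ :=
  ‖LinearMap.toContinuousLinearMap (Matrix.toEuclideanLin A)‖

/-- The measurement map `𝒜(ρ)_k = trace (A k * ρ)` satisfies the `(s, δ)`-RIP. -/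
def IsRIP {D K : ℕ} (A : Fin K → Matrix (Fin D) (Fin D) ℂ) (s : ℕ) (δ : ℝ) : Prop :=
  ∀ ρ : Matrix (Fin D) (Fin D) ℂ, ρ.rank ≤ s →
    (1 - δ) * frobNorm ρ ^ 2 ≤ ((D : ℝ) / (K : ℝ)) * ∑ k, ‖Matrix.trace (A k * ρ)‖ ^ 2 ∧
      ((D : ℝ) / (K : ℝ)) * ∑ k, ‖Matrix.trace (A k * ρ)‖ ^ 2 ≤ (1 + δ) * frobNorm ρ ^ 2

/-- The adjoint of the measurement map: `𝒜*(e) = Σ_k e_k A_k`. -/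
noncomputable def adjointMap {D K : ℕ} (A : Fin K → Matrix (Fin D) (Fin D) ℂ)
    (e : Fin K → ℝ) : Matrix (Fin D) (Fin D) ℂ :=
  ∑ k, (e k : ℂ) • A k

/-- The Wirtinger gradient `G(U) = (D/K) Σ_k (trace(A_k U Uᴴ) − ŷ_k) A_k U`. -/
noncomputable def wGrad {D K r : ℕ} (A : Fin K → Matrix (Fin D) (Fin D) ℂ)
    (yhat : Fin K → ℝ) (U : Matrix (Fin D) (Fin r) ℂ) : Matrix (Fin D) (Fin r) ℂ :=
  ((D : ℂ) / (K : ℂ)) • ∑ k, (Matrix.trace (A k * (U * Uᴴ)) - (yhat k : ℂ)) • (A k * U)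

/-- The Wirtinger Hessian quadratic form at `U` in direction `Δ`. -/
noncomputable def wHess {D K r : ℕ} (A : Fin K → Matrix (Fin D) (Fin D) ℂ)
    (yhat : Fin K → ℝ) (U Δ : Matrix (Fin D) (Fin r) ℂ) : ℝ :=
  (2 * (D : ℝ) / (K : ℝ)) * ∑ k, (‖Matrix.trace (A k * (U * Δᴴ))‖ ^ 2
      + ((Matrix.trace (A k * (U * Δᴴ))) ^ 2).re)
    + (2 * (D : ℝ) / (K : ℝ)) *
      (Matrix.trace ((∑ k, (Matrix.trace (A k * (U * Uᴴ)) - (yhat k : ℂ)) • A k)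
        * (Δ * Δᴴ))).re

/-- The function `h(δ)` from the recovery-error bound. -/
noncomputable def hfun (δ : ℝ) : ℝ :=
  (Real.sqrt 2 + Real.sqrt (82.55 - 762.54 * δ - 843.09 * δ ^ 2)) / (1.5 - 15.7 * δ)

/-- The smallest singular value `σ_r(X)`: the square root of the smallest
eigenvalue of `Xᴴ X`. -/
noncomputable def sigmaMin {D r : ℕ} (X : Matrix (Fin D) (Fin r) ℂ) : ℝ :=
  Real.sqrt (⨅ i : Fin r, (Matrix.isHermitian_conjTranspose_mul_self X).eigenvalues i)


set_option maxHeartbeats 1000000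
set_option synthInstance.maxHeartbeats 400000

/-! ### Auxiliary machinery -/

/-- squared Frobenius norm as a plain sum -/
noncomputable def fro2 {m n : ℕ} (A : Matrix (Fin m) (Fin n) ℂ) : ℝ :=
  ∑ i, ∑ j, ‖A i j‖ ^ 2

lemma fro2_nonneg {m n : ℕ} (A : Matrix (Fin m) (Fin n) ℂ) : 0 ≤ fro2 A := by
  apply Finset.sum_nonneg; intro i _; apply Finset.sum_nonneg; intro j _; positivity

lemma frobNorm_sq {m n : ℕ} (A : Matrix (Fin m) (Fin n) ℂ) : frobNorm A ^ 2 = fro2 A :=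
  Real.sq_sqrt (fro2_nonneg A)

lemma fro2_eq_re_trace {m n : ℕ} (A : Matrix (Fin m) (Fin n) ℂ) :
    fro2 A = (Matrix.trace (Aᴴ * A)).re := by
  unfold fro2
  rw [Matrix.trace, Complex.re_sum, Finset.sum_comm]
  apply Finset.sum_congr rfl
  intro j _
  rw [Matrix.diag_apply, Matrix.mul_apply, Complex.re_sum]
  apply Finset.sum_congr rfl
  intro i _
  rw [Matrix.conjTranspose_apply]
  simp only [Complex.star_def, Complex.mul_re, Complex.conj_re, Complex.conj_im,
    Complex.sq_norm, Complex.normSq_apply]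
  ring

lemma himag (z : ℂ) :
    ‖(-Complex.I) * z‖ ^ 2 + (((-Complex.I) * z) ^ 2).re
      = (1/2) * ‖z - (starRingEnd ℂ) z‖ ^ 2 := by
  have h1 : ‖(-Complex.I) * z‖ = ‖z‖ := by simp
  have h2 : ((-Complex.I) * z) ^ 2 = -(z^2) := by
    have : (Complex.I)^2 = -1 := Complex.I_sq
    ring_nf
    rw [Complex.I_sq]
    ring
  have hn : ∀ w : ℂ, ‖w‖^2 = w.re^2 + w.im^2 := by
    intro w
    rw [Complex.sq_norm, Complex.normSq_apply]; ring
  rw [h1, h2, hn z, hn (z - (starRingEnd ℂ) z)]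
  simp only [Complex.neg_re, pow_two, Complex.mul_re, Complex.sub_re, Complex.sub_im,
    Complex.conj_re, Complex.conj_im]
  ring

lemma arith_key {δ : ℝ} (h0 : 0 ≤ δ) (h9 : δ ≤ 0.09) :
    2 * Real.sqrt 2 * (1.5 - 15.7 * δ)
      ≤ (1 - 3*δ) * (Real.sqrt 2 + Real.sqrt (82.55 - 762.54 * δ - 843.09 * δ ^ 2)) := by
  have hs2l : (1.41:ℝ) ≤ Real.sqrt 2 := by
    rw [show (2:ℝ) = 1.41^2 + 0.0119 by norm_num]
    nlinarith [Real.sq_sqrt (show (0:ℝ) ≤ 1.41^2 + 0.0119 by norm_num),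
      Real.sqrt_nonneg (1.41^2+0.0119)]
  have hs2u : Real.sqrt 2 ≤ 1.415 := by
    rw [show (1.415:ℝ) = Real.sqrt (1.415^2) by rw [Real.sqrt_sq]; norm_num]
    apply Real.sqrt_le_sqrt; norm_num
  set s := Real.sqrt (82.55 - 762.54 * δ - 843.09 * δ ^ 2) with hs
  rcases le_or_gt δ 0.05 with hc | hc
  · have hsl : (6.5:ℝ) ≤ s := by
      rw [hs]
      rw [show (6.5:ℝ) = Real.sqrt (6.5^2) by rw [Real.sqrt_sq]; norm_num]
      apply Real.sqrt_le_sqrt; nlinarith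
    nlinarith [Real.sqrt_nonneg (2:ℝ)]
  · have hsl : (2.66:ℝ) ≤ s := by
      rw [hs]
      rw [show (2.66:ℝ) = Real.sqrt (2.66^2) by rw [Real.sqrt_sq]; norm_num]
      apply Real.sqrt_le_sqrt; nlinarith
    nlinarith [Real.sqrt_nonneg (2:ℝ)]

lemma rank_PS_QT_le {D r : ℕ} (P Q : Matrix (Fin D) (Fin r) ℂ)
    (S T : Matrix (Fin r) (Fin D) ℂ) :
    (P * S + Q * T).rank ≤ 2 * r := by
  set CC : Matrix (Fin D) (Fin r ⊕ Fin r) ℂ :=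
    Matrix.of fun i (j : Fin r ⊕ Fin r) => Sum.elim (fun a => P i a) (fun a => Q i a) j with hCC
  set EE : Matrix (Fin r ⊕ Fin r) (Fin D) ℂ :=
    Matrix.of fun (j : Fin r ⊕ Fin r) k => Sum.elim (fun a => S a k) (fun a => T a k) j with hEE
  have h : P * S + Q * T = CC * EE := by
    ext i k
    simp [hCC, hEE, Matrix.mul_apply, Matrix.add_apply, Fintype.sum_sum_type]
  rw [h]
  calc (CC * EE).rank ≤ CC.rank := Matrix.rank_mul_le_left CC EE
    _ ≤ Fintype.card (Fin r ⊕ Fin r) := Matrix.rank_le_card_width CC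
    _ = 2 * r := by simp [two_mul]

lemma exists_factor {D r : ℕ} (ρ : Matrix (Fin D) (Fin D) ℂ) (h : ρ.PosSemidef)
    (hrk : ρ.rank ≤ r) : ∃ Z : Matrix (Fin D) (Fin r) ℂ, Z * Zᴴ = ρ := by
  classical
  have hH := h.1
  have hcard : Fintype.card {i // hH.eigenvalues i ≠ 0} ≤ Fintype.card (Fin r) := by
    rw [← Matrix.IsHermitian.rank_eq_card_non_zero_eigs]
    simpa using hrk
  obtain ⟨emb⟩ := Function.Embedding.nonempty_of_card_le hcard
  set lam := hH.eigenvalues with hlam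
  set F1 : Matrix (Fin D) {i // lam i ≠ 0} ℂ :=
    Matrix.of (fun i k => if i = (k : Fin D) then ((Real.sqrt (lam i) : ℝ) : ℂ) else 0) with hF1
  set F2 : Matrix {i // lam i ≠ 0} (Fin r) ℂ :=
    Matrix.of (fun k j => if emb k = j then 1 else 0) with hF2
  have hF2id : F2 * F2ᴴ = 1 := by
    ext k k'
    rw [Matrix.mul_apply]
    rw [Finset.sum_eq_single (emb k)]
    · by_cases hkk : k = k'
      · subst hkk; simp [hF2, Matrix.one_apply]
      · have hne : emb k' ≠ emb k := fun hc => hkk (emb.injective hc).symm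
        simp [hF2, Matrix.one_apply, hkk, hne]
    · intro j _ hj
      have : emb k ≠ j := Ne.symm hj
      simp [hF2, this]
    · intro hmem; exact absurd (Finset.mem_univ _) hmem
  have hF1diag : F1 * F1ᴴ = Matrix.diagonal (RCLike.ofReal ∘ lam) := by
    ext i i'
    rw [Matrix.mul_apply]
    by_cases hii : i = i'
    · subst hii
      by_cases h0 : lam i ≠ 0
      · rw [Finset.sum_eq_single (⟨i, h0⟩ : {i // lam i ≠ 0})]
        · simp only [hF1, Matrix.conjTranspose_apply, Matrix.of_apply, if_true, eq_self_iff_true]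
          simp only [RCLike.star_def, Complex.conj_ofReal]
          rw [← Complex.ofReal_mul, Real.mul_self_sqrt (h.eigenvalues_nonneg i)]
          simp [Matrix.diagonal_apply_eq]
          rfl
        · intro k _ hk
          simp only [hF1, Matrix.conjTranspose_apply, Matrix.of_apply]
          rw [if_neg]
          · simp
          · intro hik
            apply hk
            exact Subtype.ext hik.symm
        · intro hmem; exact absurd (Finset.mem_univ _) hmem
      · push_neg at h0
        rw [Finset.sum_eq_zero]
        · simp [Matrix.diagonal_apply_eq, Function.comp, h0]
        · intro k _
          simp only [hF1, Matrix.conjTranspose_apply, Matrix.of_apply]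
          rw [if_neg]
          · simp
          · intro hik
            exact k.2 (hik ▸ h0)
    · rw [Matrix.diagonal_apply_ne _ hii]
      apply Finset.sum_eq_zero
      intro k _
      simp only [hF1, Matrix.conjTranspose_apply, Matrix.of_apply]
      by_cases c1 : i = (k : Fin D)
      · rw [if_pos c1, if_neg]
        · simp
        · intro hc; exact hii (c1.trans hc.symm)
      · rw [if_neg c1]; simp
  refine ⟨(hH.eigenvectorUnitary : Matrix (Fin D) (Fin D) ℂ) * (F1 * F2), ?_⟩
  have expand : ((hH.eigenvectorUnitary : Matrix (Fin D) (Fin D) ℂ) * (F1 * F2)) *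
      ((hH.eigenvectorUnitary : Matrix (Fin D) (Fin D) ℂ) * (F1 * F2))ᴴ
      = (hH.eigenvectorUnitary : Matrix (Fin D) (Fin D) ℂ) *
        (F1 * (F2 * F2ᴴ) * F1ᴴ) *
        (star (hH.eigenvectorUnitary : Matrix (Fin D) (Fin D) ℂ)) := by
    rw [Matrix.conjTranspose_mul, Matrix.conjTranspose_mul]
    rw [Matrix.star_eq_conjTranspose]
    noncomm_ring [Matrix.mul_assoc]
  rw [expand, hF2id, Matrix.mul_one, hF1diag]
  exact hH.spectral_theorem.symm

lemma aligned_of_unit {r : ℕ} (C : Matrix (Fin r) (Fin r) ℂ) (hC : IsUnit C.det) :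
    ∃ R : Matrix (Fin r) (Fin r) ℂ, R * Rᴴ = 1 ∧ Rᴴ * R = 1 ∧ (C * R)ᴴ = C * R := by
  classical
  have hpsd : (C * Cᴴ).PosSemidef := Matrix.posSemidef_self_mul_conjTranspose C
  obtain ⟨H, hHsa, -, hH2'⟩ := open scoped MatrixOrder in
    CFC.exists_sqrt_of_isSelfAdjoint_of_quasispectrumRestricts hpsd.isHermitian
      (QuasispectrumRestricts.nnreal_of_nonneg hpsd.nonneg)
  have hH2 : H * H = C * Cᴴ := by rw [hH2']
  have hHher : Hᴴ = H := hHsa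
  have hCH : IsUnit (Cᴴ).det := by
    rw [Matrix.det_conjTranspose]; exact hC.star
  have hdetH : IsUnit H.det := by
    have h1 : H.det * H.det = C.det * (Cᴴ).det := by
      rw [← Matrix.det_mul, hH2, Matrix.det_mul]
    have hu : IsUnit (H.det * H.det) := by rw [h1]; exact hC.mul hCH
    exact isUnit_of_mul_isUnit_left hu
  refine ⟨C⁻¹ * H, ?_, ?_, ?_⟩
  · rw [Matrix.conjTranspose_mul, hHher, Matrix.conjTranspose_nonsing_inv]
    calc C⁻¹ * H * (H * (Cᴴ)⁻¹) = C⁻¹ * (H * H) * (Cᴴ)⁻¹ := by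
          simp only [Matrix.mul_assoc]
      _ = C⁻¹ * C * (Cᴴ * (Cᴴ)⁻¹) := by rw [hH2]; simp only [Matrix.mul_assoc]
      _ = 1 := by rw [Matrix.nonsing_inv_mul _ hC, Matrix.mul_nonsing_inv _ hCH]; simp
  · rw [Matrix.conjTranspose_mul, hHher, Matrix.conjTranspose_nonsing_inv]
    have hinv : (Cᴴ)⁻¹ * C⁻¹ = (C * Cᴴ)⁻¹ := (Matrix.mul_inv_rev C Cᴴ).symm
    calc H * (Cᴴ)⁻¹ * (C⁻¹ * H) = H * ((Cᴴ)⁻¹ * C⁻¹) * H := by simp only [Matrix.mul_assoc]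
      _ = H * (H * H)⁻¹ * H := by rw [hinv, hH2]
      _ = H * (H⁻¹ * H⁻¹) * H := by rw [Matrix.mul_inv_rev]
      _ = (H * H⁻¹) * (H⁻¹ * H) := by simp only [Matrix.mul_assoc]
      _ = 1 := by rw [Matrix.mul_nonsing_inv _ hdetH, Matrix.nonsing_inv_mul _ hdetH]; simp
  · have : C * (C⁻¹ * H) = H := by
      rw [← Matrix.mul_assoc, Matrix.mul_nonsing_inv _ hC, Matrix.one_mul]
    rw [this, hHher]

lemma exists_aligned {r : ℕ} (B : Matrix (Fin r) (Fin r) ℂ) :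
    ∃ R : Matrix (Fin r) (Fin r) ℂ, R * Rᴴ = 1 ∧ (B * R)ᴴ = B * R := by
  classical
  -- pick a sequence tₙ → 0 with B + tₙ•1 invertible
  have hseq : ∀ n : ℕ, ∃ t : ℝ, 0 < t ∧ t ≤ 1/(n+1) ∧ IsUnit (B + (t:ℂ) • 1).det := by
    intro n
    have hfin : (Set.Ioo (0:ℝ) (1/(n+1))).Infinite := Set.Ioo_infinite (by positivity)
    have hbad : {t : ℝ | (-(t:ℂ)) ∈ spectrum ℂ B}.Finite := by
      apply Set.Finite.preimage _ (Matrix.finite_spectrum B)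
      intro x _ y _ hxy
      have := congrArg Complex.re (neg_injective hxy)
      simpa using this
    obtain ⟨t, ht⟩ := (hfin.diff hbad).nonempty
    refine ⟨t, ht.1.1, le_of_lt ht.1.2, ?_⟩
    have hnotmem : (-(t:ℂ)) ∉ spectrum ℂ B := ht.2
    have hu := spectrum.notMem_iff.mp hnotmem
    rw [Algebra.algebraMap_eq_smul_one] at hu
    have : B + (t:ℂ) • 1 = -((-(t:ℂ)) • 1 - B) := by push_cast; module
    rw [this, ← Matrix.isUnit_iff_isUnit_det]
    exact hu.neg
  choose t ht0 htle htunit using hseq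
  -- the sequence of unitaries
  have hRn : ∀ n : ℕ, ∃ R : Matrix (Fin r) (Fin r) ℂ,
      R * Rᴴ = 1 ∧ Rᴴ * R = 1 ∧ ((B + (t n:ℂ) • 1) * R)ᴴ = (B + (t n:ℂ) • 1) * R := by
    intro n; exact aligned_of_unit _ (htunit n)
  choose Rn hRn1 hRn2 hRn3 using hRn
  -- compactness
  set S : Set (Matrix (Fin r) (Fin r) ℂ) :=
    Set.pi Set.univ (fun _ : Fin r => Set.pi Set.univ
      (fun _ : Fin r => Metric.closedBall (0:ℂ) 1)) with hS
  have hScomp : IsCompact S :=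
    isCompact_univ_pi (fun i => isCompact_univ_pi (fun j => isCompact_closedBall _ _))
  have hmem : ∀ n, Rn n ∈ S := by
    intro n
    rw [hS]
    intro i _
    intro j _
    simp only [Metric.mem_closedBall, dist_zero_right]
    have hdiag := congrFun (congrFun (hRn2 n) j) j
    have : ((Rn n)ᴴ * Rn n) j j = (1 : Matrix (Fin r) (Fin r) ℂ) j j := hdiag
    rw [Matrix.mul_apply, Matrix.one_apply_eq] at this
    have hterm : ∀ z : ℂ, (star z * z).re = Complex.normSq z := fun z => by
      simp [Complex.star_def, Complex.mul_re, Complex.normSq_apply]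
      try ring
    have hsum : ∑ k, Complex.normSq (Rn n k j) = 1 := by
      have h2 := congrArg Complex.re this
      rw [Complex.re_sum] at h2
      simp only [Complex.one_re] at h2
      rw [← h2]
      apply Finset.sum_congr rfl
      intro k _
      rw [Matrix.conjTranspose_apply, hterm]
    have hle : Complex.normSq (Rn n i j) ≤ 1 := by
      rw [← hsum]
      exact Finset.single_le_sum (f := fun k => Complex.normSq (Rn n k j))
        (fun k _ => Complex.normSq_nonneg _) (Finset.mem_univ i)
    rw [Complex.norm_def]
    calc Real.sqrt (Complex.normSq (Rn n i j)) ≤ Real.sqrt 1 := Real.sqrt_le_sqrt hle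
      _ = 1 := Real.sqrt_one
  haveI : FirstCountableTopology (Matrix (Fin r) (Fin r) ℂ) :=
    inferInstanceAs (FirstCountableTopology (Fin r → Fin r → ℂ))
  obtain ⟨R, hRS, φ, hφ, hconv⟩ := hScomp.tendsto_subseq hmem
  -- limit of t along φ is 0
  have htzero : Filter.Tendsto (fun n => t (φ n)) Filter.atTop (nhds 0) := by
    apply squeeze_zero (fun n => le_of_lt (ht0 (φ n)))
    · intro n
      calc t (φ n) ≤ 1/((φ n : ℝ)+1) := htle (φ n)
        _ ≤ 1/((n : ℝ)+1) := by
          apply one_div_le_one_div_of_le (by positivity)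
          have h : (n:ℝ) ≤ (φ n : ℝ) := Nat.cast_le.mpr hφ.le_apply
          linarith
    · exact tendsto_one_div_add_atTop_nhds_zero_nat
  have htzeroC : Filter.Tendsto (fun n => ((t (φ n) : ℂ))) Filter.atTop (nhds 0) := by
    have : Filter.Tendsto (fun x : ℝ => (x : ℂ)) (nhds 0) (nhds 0) := by
      have := (Complex.continuous_ofReal).tendsto 0
      simpa using this
    exact this.comp htzero
  have hRe : ∀ i j, Filter.Tendsto (fun n => Rn (φ n) i j) Filter.atTop (nhds (R i j)) := by
    intro i j
    have h1 : Continuous (fun M : Matrix (Fin r) (Fin r) ℂ => M i j) :=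
      (continuous_apply j).comp (continuous_apply i)
    exact (h1.tendsto R).comp hconv
  -- R is unitary
  have hRunit : R * Rᴴ = 1 := by
    ext i j
    have hA : Filter.Tendsto (fun n => ∑ k, Rn (φ n) i k * star (Rn (φ n) j k))
        Filter.atTop (nhds (∑ k, R i k * star (R j k))) := by
      apply tendsto_finset_sum
      intro k _
      exact (hRe i k).mul ((continuous_star.tendsto _).comp (hRe j k))
    have hB : (fun n => ∑ k, Rn (φ n) i k * star (Rn (φ n) j k))
        = fun _ => (1 : Matrix (Fin r) (Fin r) ℂ) i j := by
      funext n
      have h := congrFun (congrFun (hRn1 (φ n)) i) j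
      rw [Matrix.mul_apply] at h
      simp only [Matrix.conjTranspose_apply] at h
      exact h
    have hC : (R * Rᴴ) i j = ∑ k, R i k * star (R j k) := by
      rw [Matrix.mul_apply]
      simp only [Matrix.conjTranspose_apply]
    rw [hB] at hA
    rw [hC]
    exact tendsto_nhds_unique hA tendsto_const_nhds
  have hBR : (B * R)ᴴ = B * R := by
    have hf : ∀ i j, Filter.Tendsto (fun n => (∑ k, (B i k + (t (φ n):ℂ) * (if i = k then 1 else 0))
          * Rn (φ n) k j) : ℕ → ℂ)
        Filter.atTop (nhds ((B * R) i j)) := by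
      intro i j
      have hBRij : (B * R) i j = ∑ k, (B i k + (0:ℂ) * (if i = k then 1 else 0)) * R k j := by
        rw [Matrix.mul_apply]
        apply Finset.sum_congr rfl
        intro k _
        ring
      rw [hBRij]
      apply tendsto_finset_sum
      intro k _
      exact ((tendsto_const_nhds.add (htzeroC.mul_const _))).mul (hRe k j)
    have hfentry : ∀ n i j, ((B + ((t n:ℂ)) • 1) * Rn n) i j
        = ∑ k, (B i k + (t n:ℂ) * (if i = k then 1 else 0)) * Rn n k j := by
      intro n i j
      rw [Matrix.mul_apply]
      apply Finset.sum_congr rfl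
      intro k _
      simp [Matrix.add_apply, Matrix.smul_apply, Matrix.one_apply, smul_eq_mul]
    ext i j
    rw [Matrix.conjTranspose_apply]
    have h1 : Filter.Tendsto
        (fun n => star ((∑ k, (B j k + (t (φ n):ℂ) * (if j = k then 1 else 0)) * Rn (φ n) k i)))
        Filter.atTop (nhds (star ((B * R) j i))) := (continuous_star.tendsto _).comp (hf j i)
    have h2 : (fun n => star ((∑ k, (B j k + (t (φ n):ℂ) * (if j = k then 1 else 0)) * Rn (φ n) k i)))
        = fun n => ∑ k, (B i k + (t (φ n):ℂ) * (if i = k then 1 else 0)) * Rn (φ n) k j := by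
      funext n
      rw [← hfentry (φ n) j i, ← hfentry (φ n) i j]
      have h := congrFun (congrFun (hRn3 (φ n)) i) j
      rw [Matrix.conjTranspose_apply] at h
      exact h
    rw [h2] at h1
    exact tendsto_nhds_unique h1 (hf i j)
  exact ⟨R, hRunit, hBR⟩

lemma fro2_eq_sum_eig {Dn : ℕ} (Φ : Matrix (Fin Dn) (Fin Dn) ℂ) (hΦ : Φ.IsHermitian) :
    fro2 Φ = ∑ i, hΦ.eigenvalues i ^ 2 := by
  classical
  have hfro : fro2 Φ = (Matrix.trace (Φᴴ * Φ)).re := by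
    unfold fro2
    rw [Matrix.trace, Complex.re_sum, Finset.sum_comm]
    apply Finset.sum_congr rfl
    intro j _
    rw [Matrix.diag_apply, Matrix.mul_apply, Complex.re_sum]
    apply Finset.sum_congr rfl
    intro i _
    rw [Matrix.conjTranspose_apply]
    simp only [Complex.star_def, Complex.mul_re, Complex.conj_re, Complex.conj_im,
      Complex.sq_norm, Complex.normSq_apply]
    ring
  rw [hfro]
  set V := (hΦ.eigenvectorUnitary : Matrix (Fin Dn) (Fin Dn) ℂ) with hV
  set Dg := Matrix.diagonal (RCLike.ofReal ∘ hΦ.eigenvalues : Fin Dn → ℂ) with hDg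
  have hVV : Vᴴ * V = 1 := by
    have := (hΦ.eigenvectorUnitary).2
    rw [Unitary.mem_iff] at this
    simpa [Matrix.star_eq_conjTranspose] using this.1
  have hspec : Φ = V * Dg * Vᴴ := by
    have := hΦ.spectral_theorem
    rw [Unitary.conjStarAlgAut_apply, Matrix.star_eq_conjTranspose] at this
    exact this
  have htr : Φᴴ * Φ = V * (Dg * Dg) * Vᴴ := by
    rw [hΦ.eq] -- hΦ : Φᴴ = Φ
    rw [hspec]
    calc V * Dg * Vᴴ * (V * Dg * Vᴴ) = V * Dg * (Vᴴ * V) * Dg * Vᴴ := by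
          simp only [Matrix.mul_assoc]
      _ = V * (Dg * Dg) * Vᴴ := by rw [hVV]; simp only [Matrix.mul_one, Matrix.mul_assoc]
  rw [htr]
  rw [Matrix.trace_mul_cycle]
  rw [← Matrix.mul_assoc, hVV, Matrix.one_mul]
  rw [hDg, Matrix.diagonal_mul_diagonal, Matrix.trace_diagonal]
  rw [Complex.re_sum]
  apply Finset.sum_congr rfl
  intro i _
  simp only [Function.comp_apply]
  rw [show (RCLike.ofReal (hΦ.eigenvalues i) : ℂ) = ((hΦ.eigenvalues i : ℝ) : ℂ) from rfl,
    ← Complex.ofReal_mul, Complex.ofReal_re]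
  ring

lemma trace_bound {Dn : ℕ} (N Φ : Matrix (Fin Dn) (Fin Dn) ℂ) (hΦ : Φ.IsHermitian) (s : ℕ)
    (hrk : Φ.rank ≤ s) :
    (Matrix.trace (N * Φ)).re ≤ specNorm N * Real.sqrt s * frobNorm Φ := by
  classical
  set V := (hΦ.eigenvectorUnitary : Matrix (Fin Dn) (Fin Dn) ℂ) with hV
  set lam := hΦ.eigenvalues with hlam
  set Dg := Matrix.diagonal (RCLike.ofReal ∘ lam : Fin Dn → ℂ) with hDg
  have hVV : Vᴴ * V = 1 := by
    have := (hΦ.eigenvectorUnitary).2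
    rw [Unitary.mem_iff] at this
    simpa [Matrix.star_eq_conjTranspose] using this.1
  have hspec : Φ = V * Dg * Vᴴ := by
    have := hΦ.spectral_theorem
    rw [Unitary.conjStarAlgAut_apply, Matrix.star_eq_conjTranspose] at this
    exact this
  have htr : Matrix.trace (N * Φ) = ∑ i, (Vᴴ * (N * V)) i i * ((lam i : ℝ) : ℂ) := by
    rw [hspec]
    rw [show N * (V * Dg * Vᴴ) = (N * V) * Dg * Vᴴ by simp only [Matrix.mul_assoc]]
    rw [Matrix.trace_mul_cycle]
    rw [Matrix.trace]
    apply Finset.sum_congr rfl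
    intro i _
    rw [Matrix.diag_apply, Matrix.mul_diagonal]
    simp [hDg]
  -- each diagonal entry bounded by specNorm
  have hbound : ∀ i, |((Vᴴ * (N * V)) i i).re| ≤ specNorm N := by
    intro i
    set v : EuclideanSpace ℂ (Fin Dn) := (WithLp.equiv 2 (Fin Dn → ℂ)).symm (fun a => V a i)
      with hv
    have hventry : ∀ a, v a = V a i := fun a => rfl
    have hnormv : ‖v‖ ^ 2 = 1 := by
      rw [EuclideanSpace.norm_eq]
      rw [Real.sq_sqrt (by positivity)]
      have h := congrFun (congrFun hVV i) i
      rw [Matrix.mul_apply] at h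
      have h2 := congrArg Complex.re h
      rw [Complex.re_sum] at h2
      simp only [Matrix.one_apply_eq, Complex.one_re] at h2
      rw [← h2]
      apply Finset.sum_congr rfl
      intro a _
      rw [Matrix.conjTranspose_apply, hventry]
      simp only [Complex.star_def, Complex.mul_re, Complex.conj_re, Complex.conj_im,
        Complex.sq_norm, Complex.normSq_apply]
      ring
    have happly : ∀ a, ((Matrix.toEuclideanLin N) v) a = (N * V) a i := by
      intro a
      have h1 : ((Matrix.toEuclideanLin N) v) a = (N.mulVec (fun b => V b i)) a := rfl
      rw [h1, Matrix.mulVec, Matrix.mul_apply]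
      rfl
    have hci : (Vᴴ * (N * V)) i i = inner ℂ v ((Matrix.toEuclideanLin N) v) := by
      rw [Matrix.mul_apply]
      rw [PiLp.inner_apply]
      apply Finset.sum_congr rfl
      intro a _
      rw [Matrix.conjTranspose_apply, happly, hventry]
      rw [RCLike.inner_apply']
      rfl
    have hnorm1 : ‖v‖ = 1 := by
      nlinarith [norm_nonneg v]
    calc |((Vᴴ * (N * V)) i i).re| ≤ ‖(Vᴴ * (N * V)) i i‖ :=
          Complex.abs_re_le_norm _
      _ = ‖(inner ℂ v ((Matrix.toEuclideanLin N) v) : ℂ)‖ := by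
          rw [hci]
      _ ≤ ‖v‖ * ‖(Matrix.toEuclideanLin N) v‖ := norm_inner_le_norm _ _
      _ ≤ ‖v‖ * (specNorm N * ‖v‖) := by
          apply mul_le_mul_of_nonneg_left _ (norm_nonneg v)
          have hle := (LinearMap.toContinuousLinearMap (Matrix.toEuclideanLin N)).le_opNorm v
          have hco : (LinearMap.toContinuousLinearMap (Matrix.toEuclideanLin N)) v
              = (Matrix.toEuclideanLin N) v := rfl
          rw [hco] at hle
          exact hle
      _ = specNorm N := by rw [hnorm1]; ring
  have hnu : 0 ≤ specNorm N := norm_nonneg _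
  have step1 : (Matrix.trace (N * Φ)).re ≤ ∑ i, |lam i| * specNorm N := by
    have hre : (Matrix.trace (N * Φ)).re = ∑ i, lam i * ((Vᴴ * (N * V)) i i).re := by
      rw [htr, Complex.re_sum]
      apply Finset.sum_congr rfl
      intro i _
      rw [Complex.mul_re]
      simp only [Complex.ofReal_re, Complex.ofReal_im, mul_zero, sub_zero]
      ring
    rw [hre]
    apply Finset.sum_le_sum
    intro i _
    calc lam i * ((Vᴴ * (N * V)) i i).re ≤ |lam i * ((Vᴴ * (N * V)) i i).re| := le_abs_self _
      _ = |lam i| * |((Vᴴ * (N * V)) i i).re| := abs_mul _ _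
      _ ≤ |lam i| * specNorm N := mul_le_mul_of_nonneg_left (hbound i) (abs_nonneg _)
  set S := Finset.univ.filter (fun i => lam i ≠ 0) with hSdef
  have hsupp : ∑ i, |lam i| = ∑ i ∈ S, |lam i| := by
    rw [← Finset.sum_filter_add_sum_filter_not Finset.univ (fun i => lam i ≠ 0) (fun i => |lam i|)]
    have : ∑ i ∈ Finset.univ.filter (fun i => ¬ lam i ≠ 0), |lam i| = 0 := by
      apply Finset.sum_eq_zero
      intro i hi
      rw [Finset.mem_filter] at hi
      push_neg at hi
      rw [hi.2]
      simp
    rw [this, add_zero]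
  have hcard : (S.card : ℝ) ≤ (s : ℝ) := by
    have h1 : Φ.rank = Fintype.card {i // lam i ≠ 0} := hΦ.rank_eq_card_non_zero_eigs
    have h2 : Fintype.card {i // lam i ≠ 0} = S.card := by
      rw [hSdef]
      exact Fintype.card_subtype _
    have : S.card ≤ s := by omega
    exact_mod_cast this
  have hCS : (∑ i ∈ S, |lam i|)^2 ≤ (S.card : ℝ) * ∑ i ∈ S, |lam i|^2 := by
    exact_mod_cast sq_sum_le_card_mul_sum_sq (s := S) (f := fun i => |lam i|)
  have hsum2 : ∑ i ∈ S, |lam i|^2 ≤ fro2 Φ := by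
    rw [fro2_eq_sum_eig Φ hΦ]
    have : ∀ i, |lam i|^2 = lam i ^ 2 := fun i => sq_abs _
    calc ∑ i ∈ S, |lam i|^2 = ∑ i ∈ S, lam i ^2 := by
          apply Finset.sum_congr rfl; intro i _; exact sq_abs _
      _ ≤ ∑ i, lam i ^ 2 := Finset.sum_le_sum_of_subset_of_nonneg (Finset.subset_univ S)
          (fun i _ _ => sq_nonneg _)
  have habs_le : ∑ i, |lam i| ≤ Real.sqrt s * frobNorm Φ := by
    have hnn : 0 ≤ ∑ i ∈ S, |lam i| := Finset.sum_nonneg (fun i _ => abs_nonneg _)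
    have hsq : (∑ i ∈ S, |lam i|)^2 ≤ (s : ℝ) * fro2 Φ := by
      calc (∑ i ∈ S, |lam i|)^2 ≤ (S.card : ℝ) * ∑ i ∈ S, |lam i|^2 := hCS
        _ ≤ (s : ℝ) * fro2 Φ := by
            apply mul_le_mul hcard hsum2 (Finset.sum_nonneg (fun i _ => sq_nonneg _))
              (Nat.cast_nonneg s)
    rw [hsupp]
    have h3 : Real.sqrt s * frobNorm Φ = Real.sqrt ((s:ℝ) * fro2 Φ) := by
      rw [Real.sqrt_mul (Nat.cast_nonneg s)]
      rfl
    rw [h3]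
    have := Real.sqrt_le_sqrt hsq
    rwa [Real.sqrt_sq hnn] at this
  calc (Matrix.trace (N * Φ)).re ≤ ∑ i, |lam i| * specNorm N := step1
    _ = specNorm N * ∑ i, |lam i| := by rw [← Finset.sum_mul]; ring
    _ ≤ specNorm N * (Real.sqrt s * frobNorm Φ) := mul_le_mul_of_nonneg_left habs_le hnu
    _ = specNorm N * Real.sqrt s * frobNorm Φ := by ring

lemma key_identity {D r : ℕ} (U W : Matrix (Fin D) (Fin r) ℂ)
    (hWU : Wᴴ * U = Uᴴ * W) :
    fro2 (U * Uᴴ - W * Wᴴ) = fro2 (W * Uᴴ - U * Wᴴ) + fro2 (Uᴴ * U - Wᴴ * W) := by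
  rw [fro2_eq_re_trace, fro2_eq_re_trace, fro2_eq_re_trace, ← Complex.add_re]
  congr 1
  have e1 : Matrix.trace (U * (Uᴴ * (U * Uᴴ))) = Matrix.trace (Uᴴ * (U * (Uᴴ * U))) := by
    rw [Matrix.trace_mul_comm]; simp only [Matrix.mul_assoc]
  have e2 : Matrix.trace (W * (Wᴴ * (W * Wᴴ))) = Matrix.trace (Wᴴ * (W * (Wᴴ * W))) := by
    rw [Matrix.trace_mul_comm]; simp only [Matrix.mul_assoc]
  have e3 : Matrix.trace (U * (Wᴴ * (W * Uᴴ))) = Matrix.trace (Wᴴ * (W * (Uᴴ * U))) := by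
    rw [Matrix.trace_mul_comm]; simp only [Matrix.mul_assoc]
  have e4 : Matrix.trace (W * (Uᴴ * (U * Wᴴ))) = Matrix.trace (Uᴴ * (U * (Wᴴ * W))) := by
    rw [Matrix.trace_mul_comm]; simp only [Matrix.mul_assoc]
  have c1 : Matrix.trace (U * (Uᴴ * (W * Wᴴ))) = Matrix.trace (Uᴴ * (W * (Uᴴ * W))) := by
    rw [Matrix.trace_mul_comm]; simp only [Matrix.mul_assoc]
    rw [hWU]
  have c2 : Matrix.trace (W * (Wᴴ * (U * Uᴴ))) = Matrix.trace (Uᴴ * (W * (Uᴴ * W))) := by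
    rw [← Matrix.mul_assoc, Matrix.trace_mul_comm]
    simp only [Matrix.mul_assoc]
    rw [← c1]
  have c3 : Matrix.trace (U * (Wᴴ * (U * Wᴴ))) = Matrix.trace (Uᴴ * (W * (Uᴴ * W))) := by
    rw [Matrix.trace_mul_comm]; simp only [Matrix.mul_assoc]
    rw [hWU, ← Matrix.mul_assoc, hWU]
    simp only [Matrix.mul_assoc]
  have c4 : Matrix.trace (W * (Uᴴ * (W * Uᴴ))) = Matrix.trace (Uᴴ * (W * (Uᴴ * W))) := by
    rw [Matrix.trace_mul_comm]; simp only [Matrix.mul_assoc]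
  simp only [Matrix.conjTranspose_sub, Matrix.conjTranspose_mul,
    Matrix.conjTranspose_conjTranspose, Matrix.sub_mul, Matrix.mul_sub, Matrix.trace_sub,
    Matrix.mul_assoc]
  rw [e1, e2, e3, e4, c1, c2, c3, c4]
  ring

/-- Any critical point far from the target is a strict saddle point. -/
theorem stmt_1 {D K r : ℕ} (hD : 0 < D) (hK : 0 < K) (hr : 0 < r) (hrD : r ≤ D)
    (A : Fin K → Matrix (Fin D) (Fin D) ℂ) (hA : ∀ k, (A k).IsHermitian)
    (ρstar : Matrix (Fin D) (Fin D) ℂ) (hpsd : ρstar.PosSemidef) (hrank : ρstar.rank ≤ r)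
    (δ : ℝ) (hδ0 : 0 ≤ δ) (hδ : δ ≤ 0.09) (hRIP : IsRIP A (2 * r) δ)
    (yhat e : Fin K → ℝ)
    (he : ∀ k, (e k : ℂ) = (yhat k : ℂ) - Matrix.trace (A k * ρstar))
    (U : Matrix (Fin D) (Fin r) ℂ)
    (hcrit : wGrad A yhat U = 0)
    (hfar : hfun δ * ((D : ℝ) * Real.sqrt r / (K : ℝ)) * specNorm (adjointMap A e)
      < frobNorm (U * Uᴴ - ρstar)) :
    ∃ Δ : Matrix (Fin D) (Fin r) ℂ, wHess A yhat U Δ < 0 := by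

  classical
  have hc0 : 0 < (D:ℝ)/(K:ℝ) := div_pos (by exact_mod_cast hD) (by exact_mod_cast hK)
  have hΦH : (U * Uᴴ - ρstar)ᴴ = U * Uᴴ - ρstar := by
    rw [Matrix.conjTranspose_sub, Matrix.conjTranspose_mul,
      Matrix.conjTranspose_conjTranspose, hpsd.1.eq]
  obtain ⟨Z, hZ⟩ := exists_factor ρstar hpsd hrank
  obtain ⟨R, hR1, hR3⟩ := exists_aligned (Uᴴ * Z)
  set W := Z * R with hWdef
  have hUW : (Uᴴ * W)ᴴ = Uᴴ * W := by rw [hWdef, ← Matrix.mul_assoc]; exact hR3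
  have hWU : Wᴴ * U = Uᴴ * W := by
    rw [Matrix.conjTranspose_mul, Matrix.conjTranspose_conjTranspose] at hUW
    exact hUW
  have hWW : W * Wᴴ = ρstar := by
    rw [hWdef, Matrix.conjTranspose_mul]
    calc Z * R * (Rᴴ * Zᴴ) = Z * (R * Rᴴ) * Zᴴ := by simp only [Matrix.mul_assoc]
      _ = ρstar := by rw [hR1, Matrix.mul_one]; exact hZ
  set Δ := U - W with hΔdef
  refine ⟨Complex.I • Δ, ?_⟩
  set Y := W * Uᴴ - U * Wᴴ with hYdef
  set Φ := U * Uᴴ - ρstar with hΦdef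
  -- the matrix M and criticality
  set M := ∑ k, (Matrix.trace (A k * (U * Uᴴ)) - (yhat k : ℂ)) • A k with hM
  have hMU : M * U = 0 := by
    have h2 : M * U = ∑ k, (Matrix.trace (A k * (U * Uᴴ)) - (yhat k:ℂ)) • (A k * U) := by
      rw [hM, Matrix.sum_mul]
      apply Finset.sum_congr rfl
      intro k _
      rw [Matrix.smul_mul]
    have h1 : wGrad A yhat U = ((D:ℂ)/(K:ℂ)) • (M * U) := by
      rw [wGrad, h2]
    rw [hcrit] at h1
    have hDK : ((D:ℂ)/(K:ℂ)) ≠ 0 := by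
      apply div_ne_zero
      · exact Nat.cast_ne_zero.mpr hD.ne'
      · exact Nat.cast_ne_zero.mpr hK.ne' 
    rcases smul_eq_zero.mp h1.symm with h | h
    · exact absurd h hDK
    · exact h
  -- star-reality helper
  have star_trace_herm : ∀ (Aa X : Matrix (Fin D) (Fin D) ℂ), Aaᴴ = Aa → Xᴴ = X →
      star (Matrix.trace (Aa * X)) = Matrix.trace (Aa * X) := by
    intro Aa X h1 h2
    rw [← Matrix.trace_conjTranspose, Matrix.conjTranspose_mul, h1, h2, Matrix.trace_mul_comm]
  -- M is Hermitian
  have hMH : Mᴴ = M := by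
    rw [hM, Matrix.conjTranspose_sum]
    apply Finset.sum_congr rfl
    intro k _
    rw [Matrix.conjTranspose_smul, (hA k).eq]
    congr 1
    rw [star_sub, star_trace_herm (A k) (U * Uᴴ) (hA k).eq
      (by rw [Matrix.conjTranspose_mul, Matrix.conjTranspose_conjTranspose])]
    congr 1
    exact Complex.conj_ofReal _
  have hUM : Uᴴ * M = 0 := by
    have : (M * U)ᴴ = Uᴴ * Mᴴ := by rw [Matrix.conjTranspose_mul]
    rw [hMU] at this
    rw [hMH] at this
    simpa using this.symm
  -- trace of M against Δ Δᴴ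
  have htrM : Matrix.trace (M * (Δ * Δᴴ)) = - Matrix.trace (M * Φ) := by
    have hzero : ∀ X : Matrix (Fin D) (Fin D) ℂ, Matrix.trace (M * ((U * Uᴴ) - X))
        = - Matrix.trace (M * X) := by
      intro X
      rw [Matrix.mul_sub, Matrix.trace_sub, ← Matrix.mul_assoc, hMU, Matrix.zero_mul,
        Matrix.trace_zero, zero_sub]
    have hΔΔ : Δ * Δᴴ = (U * Uᴴ - U * Wᴴ) - (W * Uᴴ - W * Wᴴ) := by
      rw [hΔdef, Matrix.conjTranspose_sub, Matrix.mul_sub, Matrix.sub_mul, Matrix.sub_mul]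
      abel
    have t1 : Matrix.trace (M * (U * Wᴴ)) = 0 := by
      rw [← Matrix.mul_assoc, hMU, Matrix.zero_mul, Matrix.trace_zero]
    have t2 : Matrix.trace (M * (U * Uᴴ)) = 0 := by
      rw [← Matrix.mul_assoc, hMU, Matrix.zero_mul, Matrix.trace_zero]
    have t3 : Matrix.trace (M * (W * Uᴴ)) = 0 := by
      rw [Matrix.trace_mul_comm, Matrix.mul_assoc, hUM, Matrix.mul_zero, Matrix.trace_zero]
    have t4 : Matrix.trace (M * Φ) = - Matrix.trace (M * ρstar) := by
      rw [hΦdef]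
      exact hzero ρstar
    rw [hΔΔ, Matrix.mul_sub, Matrix.trace_sub, Matrix.mul_sub, Matrix.trace_sub, t1, t2,
      Matrix.mul_sub, Matrix.trace_sub, t3, t4, ← hWW]
    ring
  -- expansion of trace (M * Φ)
  have hexp : ∀ X : Matrix (Fin D) (Fin D) ℂ,
      Matrix.trace (M * X) = ∑ k, (Matrix.trace (A k * (U * Uᴴ)) - (yhat k:ℂ))
        * Matrix.trace (A k * X) := by
    intro X
    rw [hM, Matrix.sum_mul, Matrix.trace_sum]
    apply Finset.sum_congr rfl
    intro k _
    rw [Matrix.smul_mul, Matrix.trace_smul, smul_eq_mul]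
  have hcoef : ∀ k, Matrix.trace (A k * (U * Uᴴ)) - (yhat k:ℂ)
      = Matrix.trace (A k * Φ) - (e k:ℂ) := by
    intro k
    rw [he k, hΦdef, Matrix.mul_sub, Matrix.trace_sub]
    ring
  -- reality of g
  have hgim : ∀ k, (Matrix.trace (A k * Φ)).im = 0 := by
    intro k
    have := star_trace_herm (A k) Φ (hA k).eq hΦH
    rw [Complex.star_def] at this
    exact (Complex.conj_eq_iff_im.mp this)
  -- first wHess term
  have hY' : U * Δᴴ - Δ * Uᴴ = Y := by
    rw [hΔdef, hYdef, Matrix.conjTranspose_sub, Matrix.mul_sub, Matrix.sub_mul]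
    abel
  have hfirst : ∀ k, ‖Matrix.trace (A k * (U * (Complex.I • Δ)ᴴ))‖^2
      + ((Matrix.trace (A k * (U * (Complex.I • Δ)ᴴ)))^2).re
      = (1/2) * ‖Matrix.trace (A k * Y)‖^2 := by
    intro k
    have hsm : U * (Complex.I • Δ)ᴴ = (-Complex.I) • (U * Δᴴ) := by
      rw [Matrix.conjTranspose_smul, Matrix.mul_smul]
      congr 1
      rw [Complex.star_def, Complex.conj_I]
    have htrsm : Matrix.trace (A k * (U * (Complex.I • Δ)ᴴ))
        = (-Complex.I) * Matrix.trace (A k * (U * Δᴴ)) := by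
      rw [hsm, Matrix.mul_smul, Matrix.trace_smul, smul_eq_mul]
    rw [htrsm]
    rw [himag (Matrix.trace (A k * (U * Δᴴ)))]
    congr 2
    have hstar : (starRingEnd ℂ) (Matrix.trace (A k * (U * Δᴴ)))
        = Matrix.trace (A k * (Δ * Uᴴ)) := by
      rw [← Complex.star_def, ← Matrix.trace_conjTranspose, Matrix.conjTranspose_mul,
        Matrix.conjTranspose_mul, Matrix.conjTranspose_conjTranspose, (hA k).eq,
        Matrix.trace_mul_comm]
    rw [hstar, ← Matrix.trace_sub, ← Matrix.mul_sub, hY']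
  -- second wHess term smul cleanup
  have hsecond : (Complex.I • Δ) * (Complex.I • Δ)ᴴ = Δ * Δᴴ := by
    rw [Matrix.conjTranspose_smul, Matrix.smul_mul, Matrix.mul_smul, smul_smul,
      Complex.star_def, Complex.conj_I]
    simp
  -- rank bounds
  have hrankΦ : Φ.rank ≤ 2 * r := by
    have : Φ = U * Uᴴ + Z * (-Zᴴ) := by
      rw [hΦdef, ← hZ, Matrix.mul_neg]
      abel
    rw [this]
    exact rank_PS_QT_le U Z Uᴴ (-Zᴴ)
  have hrankY : Y.rank ≤ 2 * r := by
    have : Y = W * Uᴴ + U * (-Wᴴ) := by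
      rw [hYdef, Matrix.mul_neg]
      abel
    rw [this]
    exact rank_PS_QT_le W U Uᴴ (-Wᴴ)
  -- RIP bounds
  have hRIPY := (hRIP Y hrankY).2
  have hRIPΦ := (hRIP Φ hrankΦ).1
  -- Frobenius bound for Y
  have hYle : frobNorm Y ^ 2 ≤ frobNorm Φ ^ 2 := by
    rw [frobNorm_sq, frobNorm_sq]
    have hid := key_identity U W hWU
    rw [hWW] at hid
    rw [← hΦdef] at hid
    rw [← hYdef] at hid
    nlinarith [fro2_nonneg (Uᴴ * U - Wᴴ * W)]
  -- noise bound
  have hnoise : ∑ k, (e k) * (Matrix.trace (A k * Φ)).re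
      ≤ specNorm (adjointMap A e) * (Real.sqrt 2 * Real.sqrt r) * frobNorm Φ := by
    have hexpN : Matrix.trace ((adjointMap A e) * Φ)
        = ∑ k, (e k : ℂ) * Matrix.trace (A k * Φ) := by
      rw [adjointMap, Matrix.sum_mul, Matrix.trace_sum]
      apply Finset.sum_congr rfl
      intro k _
      rw [Matrix.smul_mul, Matrix.trace_smul, smul_eq_mul]
    have hre : (Matrix.trace ((adjointMap A e) * Φ)).re
        = ∑ k, (e k) * (Matrix.trace (A k * Φ)).re := by
      rw [hexpN, Complex.re_sum]
      apply Finset.sum_congr rfl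
      intro k _
      rw [Complex.mul_re]
      simp [Complex.ofReal_re, Complex.ofReal_im]
    have hbd := trace_bound (adjointMap A e) Φ hΦH (2*r) hrankΦ
    rw [hre] at hbd
    have hsqrt : Real.sqrt ((2*r : ℕ):ℝ) = Real.sqrt 2 * Real.sqrt r := by
      push_cast
      rw [Real.sqrt_mul (by norm_num)]
    rw [hsqrt] at hbd
    exact hbd
  -- compute wHess
  have hwval : wHess A yhat U (Complex.I • Δ)
      = ((D:ℝ)/(K:ℝ)) * (∑ k, ‖Matrix.trace (A k * Y)‖^2)
        - 2*((D:ℝ)/(K:ℝ)) * (∑ k, (Matrix.trace (A k * Φ)).re^2)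
        + 2*((D:ℝ)/(K:ℝ)) * (∑ k, (e k) * (Matrix.trace (A k * Φ)).re) := by
    rw [wHess]
    rw [← hM, hsecond, htrM]
    have hsum1 : ∑ k, (‖Matrix.trace (A k * (U * (Complex.I • Δ)ᴴ))‖^2
        + ((Matrix.trace (A k * (U * (Complex.I • Δ)ᴴ)))^2).re)
        = (1/2) * ∑ k, ‖Matrix.trace (A k * Y)‖^2 := by
      rw [Finset.mul_sum]
      apply Finset.sum_congr rfl
      intro k _
      exact hfirst k
    rw [hsum1]
    have hretrace : ((- Matrix.trace (M * Φ)).re)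
        = - ∑ k, ((Matrix.trace (A k * Φ)).re^2 - (e k) * (Matrix.trace (A k * Φ)).re) := by
      rw [Complex.neg_re]
      congr 1
      rw [hexp Φ]
      rw [Complex.re_sum]
      apply Finset.sum_congr rfl
      intro k _
      rw [hcoef k, Complex.mul_re, Complex.sub_re, Complex.sub_im, hgim k]
      simp [Complex.ofReal_re, Complex.ofReal_im]
      ring
    rw [hretrace]
    rw [Finset.sum_sub_distrib]
    ring
  -- norm-squared of g entries
  have hgnorm : ∀ k, ‖Matrix.trace (A k * Φ)‖^2 = (Matrix.trace (A k * Φ)).re^2 := by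
    intro k
    rw [Complex.sq_norm, Complex.normSq_apply, hgim k]
    ring
  have hRIPΦ' : (1 - δ) * frobNorm Φ ^ 2
      ≤ ((D:ℝ)/(K:ℝ)) * ∑ k, (Matrix.trace (A k * Φ)).re^2 := by
    calc (1 - δ) * frobNorm Φ ^ 2 ≤ ((D:ℝ)/(K:ℝ)) * ∑ k, ‖Matrix.trace (A k * Φ)‖^2 := hRIPΦ
      _ = ((D:ℝ)/(K:ℝ)) * ∑ k, (Matrix.trace (A k * Φ)).re^2 := by
          congr 1
          exact Finset.sum_congr rfl (fun k _ => hgnorm k)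
  have hRIPY' : ((D:ℝ)/(K:ℝ)) * (∑ k, ‖Matrix.trace (A k * Y)‖^2)
      ≤ (1 + δ) * frobNorm Φ ^ 2 := by
    calc ((D:ℝ)/(K:ℝ)) * (∑ k, ‖Matrix.trace (A k * Y)‖^2)
        ≤ (1 + δ) * frobNorm Y ^ 2 := hRIPY
      _ ≤ (1 + δ) * frobNorm Φ ^ 2 := by
          apply mul_le_mul_of_nonneg_left hYle
          linarith
  -- final arithmetic
  set P := frobNorm Φ with hPdef
  set ν := specNorm (adjointMap A e) with hν
  set u := ((D:ℝ)/(K:ℝ)) * Real.sqrt r * ν with hu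
  have hu0 : 0 ≤ u := by
    rw [hu, hν]
    have : (0:ℝ) ≤ specNorm (adjointMap A e) := norm_nonneg _
    positivity
  have hfar' : hfun δ * u < P := by
    rw [hu]
    calc hfun δ * (((D:ℝ)/(K:ℝ)) * Real.sqrt r * ν)
        = hfun δ * ((D:ℝ) * Real.sqrt r / (K:ℝ)) * ν := by ring
      _ < P := hfar
  have hfun0 : 0 ≤ hfun δ := by
    rw [hfun]
    apply div_nonneg
    · positivity
    · nlinarith
  have hP0 : 0 < P := lt_of_le_of_lt (by positivity) hfar'
  have harith : 2 * Real.sqrt 2 ≤ (1 - 3*δ) * hfun δ := by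
    have hdenom : (0:ℝ) < 1.5 - 15.7 * δ := by nlinarith
    have := arith_key hδ0 hδ
    rw [hfun]
    rw [mul_div_assoc']
    rw [le_div_iff₀ hdenom]
    linarith
  have h3δ : (0:ℝ) < 1 - 3*δ := by nlinarith
  -- putting it together
  have hchain : wHess A yhat U (Complex.I • Δ)
      ≤ (3*δ - 1) * P^2 + 2 * Real.sqrt 2 * u * P := by
    rw [hwval]
    have hb3 : 2*((D:ℝ)/(K:ℝ)) * (∑ k, (e k) * (Matrix.trace (A k * Φ)).re)
        ≤ 2 * Real.sqrt 2 * u * P := by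
      have := mul_le_mul_of_nonneg_left hnoise (by positivity : (0:ℝ) ≤ 2*((D:ℝ)/(K:ℝ)))
      calc 2*((D:ℝ)/(K:ℝ)) * (∑ k, (e k) * (Matrix.trace (A k * Φ)).re)
          ≤ 2*((D:ℝ)/(K:ℝ)) * (ν * (Real.sqrt 2 * Real.sqrt r) * P) := this
        _ = 2 * Real.sqrt 2 * u * P := by rw [hu]; ring
    nlinarith [hRIPΦ', hRIPY']
  have hlast : 2 * Real.sqrt 2 * u * P ≤ (1 - 3*δ) * (hfun δ * u) * P := by
    have h1 : 2 * Real.sqrt 2 * u ≤ (1 - 3*δ) * (hfun δ * u) := by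
      calc 2 * Real.sqrt 2 * u ≤ ((1 - 3*δ) * hfun δ) * u :=
            mul_le_mul_of_nonneg_right harith hu0
        _ = (1 - 3*δ) * (hfun δ * u) := by ring
    exact mul_le_mul_of_nonneg_right h1 (le_of_lt hP0)
  have hfinal : (1 - 3*δ) * (hfun δ * u) * P < (1 - 3*δ) * P * P := by
    apply mul_lt_mul_of_pos_right _ hP0
    exact mul_lt_mul_of_pos_left hfar' h3δ
  calc wHess A yhat U (Complex.I • Δ) ≤ (3*δ - 1) * P^2 + 2 * Real.sqrt 2 * u * P := hchain
    _ ≤ (3*δ - 1) * P^2 + (1 - 3*δ) * (hfun δ * u) * P := by linarith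
    _ < (3*δ - 1) * P^2 + (1 - 3*δ) * P * P := by linarith
    _ = 0 := by ring
end

section
/- (First-order information at a critical point) Let ρ★ ∈ ℂ^{D×D} be Hermitian positive semidefinite with rank(ρ★) ≤ r, and suppose the measurement map 𝒜 satisfies the (2r, δ)-RIP. Let ŷ ∈ ℝ^K and e_k = ŷ_k − trace(A_k ρ★). If U ∈ ℂ^{D×r} satisfies G(U) = 0, then ‖(U U^H − ρ★)·P_U‖_F ≤ 2δ·‖U U^H − ρ★‖_F + (D·√(2r)/K)·‖𝒜*(e)‖, where P_U denotes the orthogonal projection matrix onto the column space of U (the unique Hermitian idempotent matrix whose range equals the column space of U). -/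
open Matrix
open scoped BigOperators ComplexOrder

noncomputable def emb {m n : ℕ} (X : Matrix (Fin m) (Fin n) ℂ) :
    EuclideanSpace ℂ (Fin m × Fin n) := WithLp.toLp 2 (fun p : Fin m × Fin n => X p.1 p.2)

lemma emb_add {m n : ℕ} (X Y : Matrix (Fin m) (Fin n) ℂ) : emb (X + Y) = emb X + emb Y := rfl
lemma emb_smul {m n : ℕ} (c : ℂ) (X : Matrix (Fin m) (Fin n) ℂ) : emb (c • X) = c • emb X := rfl
lemma emb_sub {m n : ℕ} (X Y : Matrix (Fin m) (Fin n) ℂ) : emb (X - Y) = emb X - emb Y := rfl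

lemma frobNorm_eq_norm_emb {m n : ℕ} (X : Matrix (Fin m) (Fin n) ℂ) :
    frobNorm X = ‖emb X‖ := by
  rw [EuclideanSpace.norm_eq, frobNorm]
  congr 1
  exact (Fintype.sum_prod_type fun p => ‖emb X p‖ ^ 2).symm

lemma inner_emb {m n : ℕ} (X Y : Matrix (Fin m) (Fin n) ℂ) :
    (inner ℂ (emb X) (emb Y) : ℂ) = Matrix.trace (Xᴴ * Y) := by
  simp only [PiLp.inner_apply, RCLike.inner_apply, Matrix.trace, Matrix.diag,
    Matrix.mul_apply, Matrix.conjTranspose_apply, Fintype.sum_prod_type]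
  rw [Finset.sum_comm]
  refine Finset.sum_congr rfl fun _ _ => Finset.sum_congr rfl fun _ _ => ?_
  exact mul_comm _ _

noncomputable def measE {D K : ℕ} (A : Fin K → Matrix (Fin D) (Fin D) ℂ)
    (ρ : Matrix (Fin D) (Fin D) ℂ) : EuclideanSpace ℂ (Fin K) := WithLp.toLp 2 (fun k => Matrix.trace (A k * ρ))

lemma measE_add {D K : ℕ} (A : Fin K → Matrix (Fin D) (Fin D) ℂ) (X Y : Matrix (Fin D) (Fin D) ℂ) :
    measE A (X + Y) = measE A X + measE A Y := by
  ext k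
  show Matrix.trace (A k * (X + Y)) = Matrix.trace (A k * X) + Matrix.trace (A k * Y)
  rw [mul_add, Matrix.trace_add]

lemma measE_sub {D K : ℕ} (A : Fin K → Matrix (Fin D) (Fin D) ℂ) (X Y : Matrix (Fin D) (Fin D) ℂ) :
    measE A (X - Y) = measE A X - measE A Y := by
  ext k
  show Matrix.trace (A k * (X - Y)) = Matrix.trace (A k * X) - Matrix.trace (A k * Y)
  rw [mul_sub, Matrix.trace_sub]

lemma measE_smul {D K : ℕ} (A : Fin K → Matrix (Fin D) (Fin D) ℂ) (c : ℂ)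
    (X : Matrix (Fin D) (Fin D) ℂ) : measE A (c • X) = c • measE A X := by
  ext k
  show Matrix.trace (A k * (c • X)) = c • Matrix.trace (A k * X)
  rw [Matrix.mul_smul, Matrix.trace_smul]

lemma norm_measE_sq {D K : ℕ} (A : Fin K → Matrix (Fin D) (Fin D) ℂ)
    (ρ : Matrix (Fin D) (Fin D) ℂ) :
    ‖measE A ρ‖ ^ 2 = ∑ k, ‖Matrix.trace (A k * ρ)‖ ^ 2 := by
  rw [EuclideanSpace.norm_eq, Real.sq_sqrt (by positivity)]
  rfl

lemma rank_add_le' {m n : ℕ} (X Y : Matrix (Fin m) (Fin n) ℂ) :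
    (X + Y).rank ≤ X.rank + Y.rank := by
  simp only [Matrix.rank]
  have hle : LinearMap.range (X + Y).mulVecLin ≤
      LinearMap.range X.mulVecLin ⊔ LinearMap.range Y.mulVecLin := by
    rintro x ⟨v, rfl⟩
    rw [Matrix.mulVecLin_add]
    exact Submodule.add_mem_sup ⟨v, rfl⟩ ⟨v, rfl⟩
  exact (Submodule.finrank_mono hle).trans
    (Submodule.finrank_add_le_finrank_add_finrank _ _)

lemma rank_smul_le' {m n : ℕ} (c : ℂ) (X : Matrix (Fin m) (Fin n) ℂ) :
    (c • X).rank ≤ X.rank := by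
  have h : c • X = (c • (1 : Matrix (Fin m) (Fin m) ℂ)) * X := by
    rw [Matrix.smul_mul, Matrix.one_mul]
  rw [h]
  exact Matrix.rank_mul_le_right _ _

/-- RIP in Euclidean form. -/
lemma rip_euclid {D K r : ℕ} {A : Fin K → Matrix (Fin D) (Fin D) ℂ} {δ : ℝ}
    (hRIP : IsRIP A (2 * r) δ) (ρ : Matrix (Fin D) (Fin D) ℂ) (hρ : ρ.rank ≤ 2 * r) :
    (1 - δ) * ‖emb ρ‖ ^ 2 ≤ ((D : ℝ) / (K : ℝ)) * ‖measE A ρ‖ ^ 2 ∧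
      ((D : ℝ) / (K : ℝ)) * ‖measE A ρ‖ ^ 2 ≤ (1 + δ) * ‖emb ρ‖ ^ 2 := by
  have h := hRIP ρ hρ
  rwa [frobNorm_eq_norm_emb, ← norm_measE_sq A ρ] at h

lemma cross_base {D K r : ℕ} {A : Fin K → Matrix (Fin D) (Fin D) ℂ} {δ : ℝ}
    (hRIP : IsRIP A (2 * r) δ)
    (X Y : Matrix (Fin D) (Fin D) ℂ) (hX : X.rank ≤ r) (hY : Y.rank ≤ r) :
    (inner ℂ (emb X) (emb Y) : ℂ).re
      - ((D : ℝ) / (K : ℝ)) * (inner ℂ (measE A X) (measE A Y) : ℂ).re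
      ≤ δ / 2 * (‖emb X‖ ^ 2 + ‖emb Y‖ ^ 2) := by
  have hadd : (X + Y).rank ≤ 2 * r := (rank_add_le' X Y).trans (by omega)
  have hsub : (X - Y).rank ≤ 2 * r := by
    have h := rank_add_le' X (-(1:ℂ) • Y)
    have h2 := rank_smul_le' (-(1:ℂ)) Y
    have : X - Y = X + (-(1:ℂ)) • Y := by rw [neg_one_smul, sub_eq_add_neg]
    rw [this]
    exact h.trans (by omega)
  have h1 := (rip_euclid hRIP (X + Y) hadd).1
  have h2 := (rip_euclid hRIP (X - Y) hsub).2
  rw [emb_add, measE_add] at h1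
  rw [emb_sub, measE_sub] at h2
  have e1 := @norm_add_sq ℂ _ _ _ _ (emb X) (emb Y)
  have e2 := @norm_sub_sq ℂ _ _ _ _ (emb X) (emb Y)
  have e3 := @norm_add_sq ℂ _ _ _ _ (measE A X) (measE A Y)
  have e4 := @norm_sub_sq ℂ _ _ _ _ (measE A X) (measE A Y)
  simp only [RCLike.re_to_complex] at e1 e2 e3 e4
  rw [e1, e3] at h1
  rw [e2, e4] at h2
  nlinarith [sq_nonneg (‖emb X‖ - ‖emb Y‖), sq_nonneg (‖emb X‖ + ‖emb Y‖)]

lemma cross_scaled {D K r : ℕ} {A : Fin K → Matrix (Fin D) (Fin D) ℂ} {δ : ℝ} (hδ0 : 0 ≤ δ)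
    (hRIP : IsRIP A (2 * r) δ)
    (X Y : Matrix (Fin D) (Fin D) ℂ) (hX : X.rank ≤ r) (hY : Y.rank ≤ r) :
    (inner ℂ (emb X) (emb Y) : ℂ).re
      - ((D : ℝ) / (K : ℝ)) * (inner ℂ (measE A X) (measE A Y) : ℂ).re
      ≤ δ * (‖emb X‖ * ‖emb Y‖) := by
  rcases eq_or_ne (‖emb X‖) 0 with hx0 | hx0
  · have hX0 : emb X = 0 := norm_eq_zero.mp hx0
    have hXz : X = 0 := by
      ext i j
      have := congrArg (fun v => v (i, j)) hX0
      simpa [emb] using this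
    subst hXz
    have hm : measE A (0 : Matrix (Fin D) (Fin D) ℂ) = 0 := by
      ext k
      show Matrix.trace (A k * 0) = 0
      simp
    have he : emb (0 : Matrix (Fin D) (Fin D) ℂ) = 0 := rfl
    rw [hm, he]
    simp [hx0]
  rcases eq_or_ne (‖emb Y‖) 0 with hy0 | hy0
  · have hY0 : emb Y = 0 := norm_eq_zero.mp hy0
    have hYz : Y = 0 := by
      ext i j
      have := congrArg (fun v => v (i, j)) hY0
      simpa [emb] using this
    subst hYz
    have hm : measE A (0 : Matrix (Fin D) (Fin D) ℂ) = 0 := by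
      ext k
      show Matrix.trace (A k * 0) = 0
      simp
    have he : emb (0 : Matrix (Fin D) (Fin D) ℂ) = 0 := rfl
    rw [hm, he]
    simp
  -- scaling
  have hxpos : 0 < ‖emb X‖ := lt_of_le_of_ne (norm_nonneg _) (Ne.symm hx0)
  have hypos : 0 < ‖emb Y‖ := lt_of_le_of_ne (norm_nonneg _) (Ne.symm hy0)
  set t : ℝ := Real.sqrt (‖emb Y‖ / ‖emb X‖) with ht
  have htpos : 0 < t := Real.sqrt_pos.mpr (by positivity)
  have ht2 : t ^ 2 = ‖emb Y‖ / ‖emb X‖ := Real.sq_sqrt (by positivity)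
  have hX' : ((t : ℂ) • X).rank ≤ r := (rank_smul_le' _ _).trans hX
  have hY' : (((t⁻¹ : ℝ) : ℂ) • Y).rank ≤ r := (rank_smul_le' _ _).trans hY
  have hbase := cross_base hRIP ((t : ℂ) • X) (((t⁻¹ : ℝ) : ℂ) • Y) hX' hY'
  rw [emb_smul, emb_smul, measE_smul, measE_smul] at hbase
  have hc : (starRingEnd ℂ) ((t : ℝ) : ℂ) * (((t⁻¹ : ℝ)) : ℂ) = 1 := by
    rw [Complex.conj_ofReal]
    norm_cast
    exact mul_inv_cancel₀ htpos.ne'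
  have hinner1 : (inner ℂ ((t : ℂ) • emb X) (((t⁻¹ : ℝ) : ℂ) • emb Y) : ℂ)
      = inner ℂ (emb X) (emb Y) := by
    rw [inner_smul_left, inner_smul_right, ← mul_assoc, hc, one_mul]
  have hinner2 : (inner ℂ ((t : ℂ) • measE A X) (((t⁻¹ : ℝ) : ℂ) • measE A Y) : ℂ)
      = inner ℂ (measE A X) (measE A Y) := by
    rw [inner_smul_left, inner_smul_right, ← mul_assoc, hc, one_mul]
  have hn1 : ‖(t : ℂ) • emb X‖ ^ 2 = t ^ 2 * ‖emb X‖ ^ 2 := by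
    rw [norm_smul]
    simp [Complex.norm_real, abs_of_pos htpos]
    ring
  have hn2 : ‖((t⁻¹ : ℝ) : ℂ) • emb Y‖ ^ 2 = (t⁻¹) ^ 2 * ‖emb Y‖ ^ 2 := by
    rw [norm_smul]
    simp [Complex.norm_real, abs_of_pos htpos, abs_of_pos (inv_pos.mpr htpos)]
    ring
  rw [hinner1, hinner2, hn1, hn2] at hbase
  have key : t ^ 2 * ‖emb X‖ ^ 2 + (t⁻¹) ^ 2 * ‖emb Y‖ ^ 2 = 2 * (‖emb X‖ * ‖emb Y‖) := by
    have hti2 : (t⁻¹) ^ 2 = ‖emb X‖ / ‖emb Y‖ := by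
      rw [inv_pow, ht2]
      field_simp
    rw [ht2, hti2]
    field_simp
    ring
  rw [key] at hbase
  calc _ ≤ δ / 2 * (2 * (‖emb X‖ * ‖emb Y‖)) := hbase
    _ = δ * (‖emb X‖ * ‖emb Y‖) := by ring

lemma norm_emb_sq {m n : ℕ} (X : Matrix (Fin m) (Fin n) ℂ) :
    ‖emb X‖ ^ 2 = ∑ i, ∑ j, ‖X i j‖ ^ 2 := by
  rw [← frobNorm_eq_norm_emb, frobNorm, Real.sq_sqrt (by positivity)]

lemma frob_mul_le_spec {Dn : ℕ} (B C : Matrix (Fin Dn) (Fin Dn) ℂ) :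
    ‖emb (B * C)‖ ≤ specNorm B * ‖emb C‖ := by
  have hs0 : 0 ≤ specNorm B := norm_nonneg _
  have hsq : ‖emb (B * C)‖ ^ 2 ≤ (specNorm B * ‖emb C‖) ^ 2 := by
    rw [norm_emb_sq]
    rw [Finset.sum_comm]
    have hcol : ∀ j : Fin Dn, ∑ i, ‖(B * C) i j‖ ^ 2
        ≤ specNorm B ^ 2 * ∑ i, ‖C i j‖ ^ 2 := by
      intro j
      set x : EuclideanSpace ℂ (Fin Dn) := WithLp.toLp 2 (fun i => C i j) with hx
      have happ : ∀ i, (Matrix.toEuclideanLin B x) i = (B * C) i j := by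
        intro i
        rfl
      have hle : ‖Matrix.toEuclideanLin B x‖ ≤ specNorm B * ‖x‖ := by
        have h := (LinearMap.toContinuousLinearMap (Matrix.toEuclideanLin B)).le_opNorm x
        rwa [LinearMap.coe_toContinuousLinearMap'] at h
      have h1 : ‖Matrix.toEuclideanLin B x‖ ^ 2 = ∑ i, ‖(B * C) i j‖ ^ 2 := by
        rw [EuclideanSpace.norm_eq, Real.sq_sqrt (by positivity)]
        exact Finset.sum_congr rfl fun i _ => by rw [happ]
      have h2 : ‖x‖ ^ 2 = ∑ i, ‖C i j‖ ^ 2 := by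
        rw [EuclideanSpace.norm_eq, Real.sq_sqrt (by positivity)]
      calc ∑ i, ‖(B * C) i j‖ ^ 2 = ‖Matrix.toEuclideanLin B x‖ ^ 2 := h1.symm
        _ ≤ (specNorm B * ‖x‖) ^ 2 := by
            have := norm_nonneg (Matrix.toEuclideanLin B x)
            nlinarith
        _ = specNorm B ^ 2 * ∑ i, ‖C i j‖ ^ 2 := by rw [mul_pow, h2]
    calc ∑ j, ∑ i, ‖(B * C) i j‖ ^ 2 ≤ ∑ j, specNorm B ^ 2 * ∑ i, ‖C i j‖ ^ 2 :=
          Finset.sum_le_sum fun j _ => hcol j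
      _ = specNorm B ^ 2 * ∑ j, ∑ i, ‖C i j‖ ^ 2 := by rw [Finset.mul_sum]
      _ = (specNorm B * ‖emb C‖) ^ 2 := by rw [mul_pow, norm_emb_sq, Finset.sum_comm]
  have h := Real.sqrt_le_sqrt hsq
  rwa [Real.sqrt_sq (norm_nonneg _), Real.sqrt_sq (by positivity)] at h

lemma trace_proj_le {Dn r : ℕ} (P : Matrix (Fin Dn) (Fin Dn) ℂ) (hP : P.IsHermitian)
    (hPi : P * P = P) (hrk : P.rank ≤ r) : (Matrix.trace P).re ≤ (r : ℝ) := by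
  classical
  set μ := hP.eigenvalues with hμ
  have h01 : ∀ i, μ i = 0 ∨ μ i = 1 := by
    intro i
    have hv := hP.mulVec_eigenvectorBasis i
    have hne : ⇑(hP.eigenvectorBasis i) ≠ 0 := by
      intro h
      have := hP.eigenvectorBasis.orthonormal.1 i
      rw [show hP.eigenvectorBasis i = 0 from by ext j; exact congrFun h j] at this
      simp at this
    have h2 : P *ᵥ (P *ᵥ ⇑(hP.eigenvectorBasis i)) = P *ᵥ ⇑(hP.eigenvectorBasis i) := by
      rw [Matrix.mulVec_mulVec, hPi]
    rw [hv, Matrix.mulVec_smul, hv, smul_smul] at h2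
    have h3 : ((μ i * μ i) - μ i) • ⇑(hP.eigenvectorBasis i) = 0 := by
      rw [sub_smul, h2, sub_self]
    obtain ⟨j, hj⟩ : ∃ j, (hP.eigenvectorBasis i) j ≠ 0 := by
      by_contra hco
      push_neg at hco
      exact hne (funext fun j => hco j)
    have h3j : (μ i * μ i - μ i) • ((hP.eigenvectorBasis i) j) = 0 := congrFun h3 j
    have h4 : μ i * μ i - μ i = 0 := by
      rcases smul_eq_zero.mp h3j with h | h
      · exact h
      · exact absurd h hj
    by_cases h0 : μ i = 0
    · exact Or.inl h0
    · right
      have hfac : μ i * (μ i - 1) = 0 := by ring_nf; ring_nf at h4; linarith [h4]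
      rcases mul_eq_zero.mp hfac with h | h
      · exact absurd h h0
      · linarith
  have htr : Matrix.trace P = ∑ i, ((μ i : ℝ) : ℂ) := by
    conv_lhs => rw [hP.spectral_theorem]
    rw [Unitary.conjStarAlgAut_apply]
    rw [Matrix.trace_mul_cycle]
    rw [show (star (hP.eigenvectorUnitary : Matrix (Fin Dn) (Fin Dn) ℂ)) *
        (hP.eigenvectorUnitary : Matrix (Fin Dn) (Fin Dn) ℂ) = 1 from by
      exact_mod_cast Unitary.coe_star_mul_self hP.eigenvectorUnitary]
    rw [Matrix.one_mul, Matrix.trace_diagonal]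
    rfl
  have hre : (Matrix.trace P).re = ∑ i, μ i := by
    rw [htr]
    rw [Complex.re_sum]
    exact Finset.sum_congr rfl fun i _ => Complex.ofReal_re _
  rw [hre]
  have hsum : ∑ i, μ i = ((Finset.univ.filter fun i => μ i ≠ 0).card : ℝ) := by
    rw [← Finset.sum_boole]
    refine Finset.sum_congr rfl fun i _ => ?_
    rcases h01 i with h | h <;> simp [h]
  rw [hsum]
  have hcard : (Finset.univ.filter fun i => μ i ≠ 0).card = P.rank := by
    rw [hP.rank_eq_card_non_zero_eigs, Fintype.card_subtype]
  rw [hcard]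
  exact_mod_cast hrk

section Main
variable {D K r : ℕ}

lemma le_of_sq_le_sq' {a b : ℝ} (h : a ^ 2 ≤ b ^ 2) (ha : 0 ≤ a) (hb : 0 ≤ b) : a ≤ b := by
  nlinarith

lemma main_helper (hD : 0 < D) (hK : 0 < K) (hr : 0 < r) (hrD : r ≤ D)
    (A : Fin K → Matrix (Fin D) (Fin D) ℂ) (hA : ∀ k, (A k).IsHermitian)
    (ρstar : Matrix (Fin D) (Fin D) ℂ) (hpsd : ρstar.PosSemidef) (hrank : ρstar.rank ≤ r)
    (δ : ℝ) (hδ0 : 0 ≤ δ) (hδ1 : δ < 1) (hRIP : IsRIP A (2 * r) δ)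
    (yhat e : Fin K → ℝ)
    (he : ∀ k, (e k : ℂ) = (yhat k : ℂ) - Matrix.trace (A k * ρstar))
    (U : Matrix (Fin D) (Fin r) ℂ)
    (hcrit : ((D : ℂ) / (K : ℂ)) • ∑ k, (Matrix.trace (A k * (U * Uᴴ)) - (yhat k : ℂ)) • (A k * U) = 0)
    (Pu : Matrix (Fin D) (Fin D) ℂ)
    (hPherm : Pu.IsHermitian) (hPidem : Pu * Pu = Pu)
    (hPrange : LinearMap.range Pu.mulVecLin = LinearMap.range U.mulVecLin) :
    frobNorm ((U * Uᴴ - ρstar) * Pu) ≤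
      2 * δ * frobNorm (U * Uᴴ - ρstar)
        + (D : ℝ) * Real.sqrt (2 * r) / (K : ℝ) * specNorm (∑ k, (e k : ℂ) • A k) := by
  classical
  set M : Matrix (Fin D) (Fin D) ℂ := U * Uᴴ - ρstar with hM
  set Y : Matrix (Fin D) (Fin D) ℂ := M * Pu with hY
  set X : Matrix (Fin D) (Fin D) ℂ := M - Y with hX
  set N : Matrix (Fin D) (Fin D) ℂ := ∑ k, (e k : ℂ) • A k with hN
  set κ : ℝ := (D : ℝ) / (K : ℝ) with hκ
  have hκ0 : 0 ≤ κ := by positivity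
  -- Pu * U = U
  have hPuU : Pu * U = U := by
    have hfix : ∀ v : Fin r → ℂ, Pu *ᵥ (U *ᵥ v) = U *ᵥ v := by
      intro v
      have hmem : U *ᵥ v ∈ LinearMap.range Pu.mulVecLin := by
        rw [hPrange]; exact ⟨v, rfl⟩
      obtain ⟨w, hw⟩ := hmem
      have h2 : Pu *ᵥ (Pu *ᵥ w) = Pu *ᵥ w := by rw [Matrix.mulVec_mulVec, hPidem]
      have hw' : Pu *ᵥ w = U *ᵥ v := hw
      rw [← hw', h2]
    ext i j
    have h := congrFun (hfix (Pi.single j 1)) i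
    rw [Matrix.mulVec_single] at h
    have h2 : (Pu *ᵥ fun i' => U i' j * 1) i = U i j * 1 := h
    simp only [mul_one] at h2
    rw [← h2]
    simp [Matrix.mulVec, Matrix.mul_apply, dotProduct]
  have hUHPu : Uᴴ * Pu = Uᴴ := by
    have := congrArg Matrix.conjTranspose hPuU
    rwa [Matrix.conjTranspose_mul, hPherm.eq] at this
  -- hermitian facts
  have hMH : Mᴴ = M := by
    rw [hM, Matrix.conjTranspose_sub, Matrix.conjTranspose_mul,
      Matrix.conjTranspose_conjTranspose, hpsd.1.eq]
  have hNH : Nᴴ = N := by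
    rw [hN, Matrix.conjTranspose_sum]
    refine Finset.sum_congr rfl fun k _ => ?_
    rw [Matrix.conjTranspose_smul, (hA k).eq]
    congr 1
    exact Complex.conj_ofReal _
  -- critical point matrix B
  set c : Fin K → ℂ := fun k => Matrix.trace (A k * (U * Uᴴ)) - (yhat k : ℂ) with hc
  set B : Matrix (Fin D) (Fin D) ℂ := ∑ k, c k • A k with hB
  have hBU : B * U = 0 := by
    have hnz : ((D : ℂ) / (K : ℂ)) ≠ 0 :=
      div_ne_zero (Nat.cast_ne_zero.mpr hD.ne') (Nat.cast_ne_zero.mpr hK.ne')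
    have h1 : (∑ k, c k • (A k * U)) = 0 := by
      rcases smul_eq_zero.mp hcrit with h | h
      · exact absurd h hnz
      · exact h
    rw [hB, Matrix.sum_mul]
    rw [← h1]
    exact Finset.sum_congr rfl fun k _ => Matrix.smul_mul (c k) (A k) U
  have hstarc : ∀ k, star (c k) = c k := by
    intro k
    rw [hc]
    simp only [star_sub]
    congr 1
    · have h1 : star (Matrix.trace (A k * (U * Uᴴ))) = Matrix.trace ((A k * (U * Uᴴ))ᴴ) :=
        (Matrix.trace_conjTranspose _).symm
      rw [h1, Matrix.conjTranspose_mul, Matrix.conjTranspose_mul,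
        Matrix.conjTranspose_conjTranspose, (hA k).eq, Matrix.trace_mul_comm]
    · exact Complex.conj_ofReal _
  have hBH : Bᴴ = B := by
    rw [hB, Matrix.conjTranspose_sum]
    refine Finset.sum_congr rfl fun k _ => ?_
    rw [Matrix.conjTranspose_smul, (hA k).eq, hstarc k]
  have hBPu : B * Pu = 0 := by
    have hv : ∀ v : Fin D → ℂ, (B * Pu) *ᵥ v = 0 := by
      intro v
      have hmem : Pu *ᵥ v ∈ LinearMap.range U.mulVecLin := by
        rw [← hPrange]; exact ⟨v, rfl⟩
      obtain ⟨w, hw⟩ := hmem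
      have hw' : U *ᵥ w = Pu *ᵥ v := hw
      rw [← Matrix.mulVec_mulVec, ← hw', Matrix.mulVec_mulVec, hBU]
      simp
    ext i j
    have h := congrFun (hv (Pi.single j 1)) i
    rw [Matrix.mulVec_single] at h
    simpa using h
  have hPuB : Pu * B = 0 := by
    have h := congrArg Matrix.conjTranspose hBPu
    rwa [Matrix.conjTranspose_mul, hBH, hPherm.eq, Matrix.conjTranspose_zero] at h
  -- trace (B * Y) = 0
  have htr0 : Matrix.trace (B * Y) = 0 := by
    rw [hY, ← Matrix.mul_assoc, Matrix.trace_mul_comm, ← Matrix.mul_assoc,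
      hPuB, Matrix.zero_mul, Matrix.trace_zero]
  -- expand trace (B * Y)
  have hexp : Matrix.trace (B * Y) = ∑ k, c k * Matrix.trace (A k * Y) := by
    rw [hB, Finset.sum_mul, Matrix.trace_sum]
    refine Finset.sum_congr rfl fun k _ => ?_
    rw [Matrix.smul_mul, Matrix.trace_smul, smul_eq_mul]
  -- c k = trace (A k * M) - e k
  have hck : ∀ k, c k = Matrix.trace (A k * M) - (e k : ℂ) := by
    intro k
    rw [hc, hM, Matrix.mul_sub, Matrix.trace_sub, he k]
    ring
  -- inner ℂ (measE A M) (measE A Y) = trace (N * Y)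
  have hNtr : Matrix.trace (N * Y) = ∑ k, (e k : ℂ) * Matrix.trace (A k * Y) := by
    rw [hN, Finset.sum_mul, Matrix.trace_sum]
    refine Finset.sum_congr rfl fun k _ => ?_
    rw [Matrix.smul_mul, Matrix.trace_smul, smul_eq_mul]
  have hMherm_tr : ∀ k, star (Matrix.trace (A k * M)) = Matrix.trace (A k * M) := by
    intro k
    have h1 : star (Matrix.trace (A k * M)) = Matrix.trace ((A k * M)ᴴ) :=
      (Matrix.trace_conjTranspose _).symm
    rw [h1, Matrix.conjTranspose_mul, hMH, (hA k).eq, Matrix.trace_mul_comm]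
  have hinnerMY : (inner ℂ (measE A M) (measE A Y) : ℂ) = Matrix.trace (N * Y) := by
    rw [PiLp.inner_apply]
    have : ∀ k : Fin K, (inner ℂ (measE A M k) (measE A Y k) : ℂ)
        = Matrix.trace (A k * M) * Matrix.trace (A k * Y) := by
      intro k
      rw [RCLike.inner_apply]
      show Matrix.trace (A k * Y) * (starRingEnd ℂ) (Matrix.trace (A k * M)) = _
      rw [starRingEnd_apply, hMherm_tr k, mul_comm]
    have hstep : ∑ k, (inner ℂ (measE A M k) (measE A Y k) : ℂ)
        = ∑ k, Matrix.trace (A k * M) * Matrix.trace (A k * Y) :=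
      Finset.sum_congr rfl fun k _ => this k
    rw [hstep]
    have hsum : ∑ k, Matrix.trace (A k * M) * Matrix.trace (A k * Y)
        = ∑ k, (c k + (e k : ℂ)) * Matrix.trace (A k * Y) := by
      refine Finset.sum_congr rfl fun k _ => ?_
      rw [hck k]; ring
    rw [hsum]
    have : ∑ k, (c k + (e k : ℂ)) * Matrix.trace (A k * Y)
        = (∑ k, c k * Matrix.trace (A k * Y)) + ∑ k, (e k : ℂ) * Matrix.trace (A k * Y) := by
      rw [← Finset.sum_add_distrib]
      exact Finset.sum_congr rfl fun k _ => by ring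
    rw [this, ← hexp, htr0, zero_add, hNtr]

  -- rank facts
  have hrankPu : Pu.rank = U.rank := by rw [Matrix.rank, Matrix.rank, hPrange]
  have hrankU : U.rank ≤ r := Matrix.rank_le_width U
  have hrankY : Y.rank ≤ r :=
    (Matrix.rank_mul_le_right M Pu).trans (by rw [hrankPu]; exact hrankU)
  have hXeq : X = ρstar * (Pu - 1) := by
    have hUUP : U * Uᴴ * Pu = U * Uᴴ := by
      rw [Matrix.mul_assoc, hUHPu]
    rw [hX, hY, hM, Matrix.sub_mul, hUUP, Matrix.mul_sub, Matrix.mul_one]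
    abel
  have hrankX : X.rank ≤ r := by
    rw [hXeq]
    exact (Matrix.rank_mul_le_left _ _).trans hrank
  have hYPu : Y * Pu = Y := by rw [hY, Matrix.mul_assoc, hPidem]
  -- orthogonality
  have hXH : Xᴴ = M - Pu * M := by
    rw [hX, Matrix.conjTranspose_sub, hMH, hY, Matrix.conjTranspose_mul, hPherm.eq, hMH]
  have hortho : (inner ℂ (emb X) (emb Y) : ℂ) = 0 := by
    rw [inner_emb, hXH, Matrix.sub_mul, Matrix.trace_sub]
    have h2 : Matrix.trace (Pu * M * Y) = Matrix.trace (M * Y) := by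
      rw [Matrix.mul_assoc, Matrix.trace_mul_comm, Matrix.mul_assoc, hYPu]
    rw [h2, sub_self]
  have hreXY0 : (inner ℂ (emb X) (emb Y) : ℂ).re = 0 := by rw [hortho]; rfl
  -- Pythagoras
  have hXY : X + Y = M := by rw [hX]; abel
  have hembM : emb M = emb X + emb Y := by rw [← hXY, emb_add]
  have hmeasM : measE A M = measE A X + measE A Y := by rw [← hXY, measE_add]
  have hpyth : ‖emb M‖ ^ 2 = ‖emb X‖ ^ 2 + ‖emb Y‖ ^ 2 := by
    rw [hembM]
    have h := @norm_add_sq ℂ _ _ _ _ (emb X) (emb Y)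
    simp only [RCLike.re_to_complex] at h
    rw [h, hreXY0]
    ring
  have hXleM : ‖emb X‖ ≤ ‖emb M‖ :=
    le_of_sq_le_sq' (by rw [hpyth]; linarith [sq_nonneg ‖emb Y‖]) (norm_nonneg _) (norm_nonneg _)
  have hYleM : ‖emb Y‖ ≤ ‖emb M‖ :=
    le_of_sq_le_sq' (by rw [hpyth]; linarith [sq_nonneg ‖emb X‖]) (norm_nonneg _) (norm_nonneg _)
  -- RIP lower bound at Y
  have hripY := (rip_euclid hRIP Y (hrankY.trans (by omega))).1
  -- decomposition of measured inner product
  have hdec : (inner ℂ (measE A M) (measE A Y) : ℂ)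
      = inner ℂ (measE A X) (measE A Y) + inner ℂ (measE A Y) (measE A Y) := by
    rw [hmeasM, inner_add_left]
  -- cross bound
  have hcross := cross_scaled hδ0 hRIP X Y hrankX hrankY
  rw [hreXY0] at hcross
  -- projector Frobenius norm bound
  have hs0 : 0 ≤ specNorm N := norm_nonneg _
  have hPufrob : ‖emb Pu‖ ≤ Real.sqrt (2 * (r : ℝ)) := by
    have h1 : ‖emb Pu‖ ^ 2 = (Matrix.trace Pu).re := by
      have h2 := @inner_self_eq_norm_sq ℂ _ _ _ _ (emb Pu)
      simp only [RCLike.re_to_complex] at h2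
      rw [← h2, inner_emb, hPherm.eq, hPidem]
    have h3 : (Matrix.trace Pu).re ≤ (r : ℝ) :=
      trace_proj_le Pu hPherm hPidem (by rw [hrankPu]; exact hrankU)
    have h4 : ‖emb Pu‖ ^ 2 ≤ 2 * (r : ℝ) := by
      rw [h1]
      have : (0 : ℝ) ≤ (r : ℝ) := Nat.cast_nonneg r
      linarith
    have h5 := Real.sqrt_le_sqrt h4
    rwa [Real.sqrt_sq (norm_nonneg _)] at h5
  -- noise bound
  have hnoise : (Matrix.trace (N * Y)).re ≤ Real.sqrt (2 * (r : ℝ)) * (specNorm N * ‖emb Y‖) := by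
    have hNPuH : (N * Pu)ᴴ = Pu * N := by
      rw [Matrix.conjTranspose_mul, hNH, hPherm.eq]
    have h5 : Matrix.trace (Pu * N * Y) = Matrix.trace (N * Y) := by
      rw [Matrix.mul_assoc, Matrix.trace_mul_comm, Matrix.mul_assoc, hYPu]
    have hNY : Matrix.trace (N * Y) = inner ℂ (emb (N * Pu)) (emb Y) := by
      rw [inner_emb, hNPuH]
      exact h5.symm
    have hre : (Matrix.trace (N * Y)).re ≤ ‖emb (N * Pu)‖ * ‖emb Y‖ := by
      rw [hNY]
      have h := @re_inner_le_norm ℂ _ _ _ _ (emb (N * Pu)) (emb Y)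
      simpa only [RCLike.re_to_complex] using h
    refine hre.trans ?_
    have h6 : ‖emb (N * Pu)‖ ≤ specNorm N * ‖emb Pu‖ := frob_mul_le_spec N Pu
    have h7 : ‖emb (N * Pu)‖ ≤ specNorm N * Real.sqrt (2 * (r : ℝ)) := by
      refine h6.trans ?_
      exact mul_le_mul_of_nonneg_left hPufrob hs0
    calc ‖emb (N * Pu)‖ * ‖emb Y‖ ≤ (specNorm N * Real.sqrt (2 * (r : ℝ))) * ‖emb Y‖ :=
          mul_le_mul_of_nonneg_right h7 (norm_nonneg _)
      _ = Real.sqrt (2 * (r : ℝ)) * (specNorm N * ‖emb Y‖) := by ring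
  -- assembly
  have hmeasYsq : (inner ℂ (measE A Y) (measE A Y) : ℂ).re = ‖measE A Y‖ ^ 2 := by
    have h := @inner_self_eq_norm_sq ℂ _ _ _ _ (measE A Y)
    simpa only [RCLike.re_to_complex] using h
  have hdec_re : (inner ℂ (measE A M) (measE A Y) : ℂ).re
      = (inner ℂ (measE A X) (measE A Y) : ℂ).re + ‖measE A Y‖ ^ 2 := by
    rw [hdec, Complex.add_re, hmeasYsq]
  have hMY_re : (inner ℂ (measE A M) (measE A Y) : ℂ).re = (Matrix.trace (N * Y)).re := by
    rw [hinnerMY]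
  -- chain of inequalities
  have hfY0 : 0 ≤ ‖emb Y‖ := norm_nonneg _
  have hfM0 : 0 ≤ ‖emb M‖ := norm_nonneg _
  have step1 : (1 - δ) * ‖emb Y‖ ^ 2 ≤ κ * ‖measE A Y‖ ^ 2 := hripY
  have step2 : κ * ‖measE A Y‖ ^ 2
      ≤ κ * (Real.sqrt (2 * (r : ℝ)) * (specNorm N * ‖emb Y‖)) + δ * (‖emb X‖ * ‖emb Y‖) := by
    have e1 : ‖measE A Y‖ ^ 2
        = (Matrix.trace (N * Y)).re - (inner ℂ (measE A X) (measE A Y) : ℂ).re := by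
      rw [← hMY_re, hdec_re]; ring
    rw [e1, mul_sub]
    have b1 : κ * (Matrix.trace (N * Y)).re
        ≤ κ * (Real.sqrt (2 * (r : ℝ)) * (specNorm N * ‖emb Y‖)) :=
      mul_le_mul_of_nonneg_left hnoise hκ0
    have b2 : -(κ * (inner ℂ (measE A X) (measE A Y) : ℂ).re) ≤ δ * (‖emb X‖ * ‖emb Y‖) := by
      linarith [hcross]
    linarith
  have step3 : ‖emb Y‖ ^ 2
      ≤ (2 * δ * ‖emb M‖ + κ * Real.sqrt (2 * (r : ℝ)) * specNorm N) * ‖emb Y‖ := by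
    have d1 : δ * ‖emb Y‖ ^ 2 ≤ δ * (‖emb M‖ * ‖emb Y‖) := by
      have h9 : ‖emb Y‖ ^ 2 ≤ ‖emb M‖ * ‖emb Y‖ := by
        rw [pow_two]
        exact mul_le_mul_of_nonneg_right hYleM hfY0
      exact mul_le_mul_of_nonneg_left h9 hδ0
    have d2 : δ * (‖emb X‖ * ‖emb Y‖) ≤ δ * (‖emb M‖ * ‖emb Y‖) := by
      have : ‖emb X‖ * ‖emb Y‖ ≤ ‖emb M‖ * ‖emb Y‖ := mul_le_mul_of_nonneg_right hXleM hfY0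
      exact mul_le_mul_of_nonneg_left this hδ0
    linarith [step1, step2, d1, d2]
  -- conclude
  rw [frobNorm_eq_norm_emb, frobNorm_eq_norm_emb]
  have hrhs : (D : ℝ) * Real.sqrt (2 * (r : ℝ)) / (K : ℝ) * specNorm N
      = κ * Real.sqrt (2 * (r : ℝ)) * specNorm N := by
    rw [hκ]; ring
  rw [hrhs]
  rcases eq_or_lt_of_le hfY0 with h0 | hpos
  · rw [← h0]
    have hg1 : 0 ≤ 2 * δ * ‖emb M‖ :=
      mul_nonneg (mul_nonneg (by norm_num) hδ0) hfM0
    have hg2 : 0 ≤ κ * Real.sqrt (2 * (r : ℝ)) * specNorm N :=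
      mul_nonneg (mul_nonneg hκ0 (Real.sqrt_nonneg _)) hs0
    linarith
  · exact le_of_mul_le_mul_right (by rw [← pow_two]; exact step3) hpos

end Main

/-- First-order information at a critical point. -/
theorem stmt_9 {D K r : ℕ} (hD : 0 < D) (hK : 0 < K) (hr : 0 < r) (hrD : r ≤ D)
    (A : Fin K → Matrix (Fin D) (Fin D) ℂ) (hA : ∀ k, (A k).IsHermitian)
    (ρstar : Matrix (Fin D) (Fin D) ℂ) (hpsd : ρstar.PosSemidef) (hrank : ρstar.rank ≤ r)
    (δ : ℝ) (hδ0 : 0 ≤ δ) (hδ1 : δ < 1) (hRIP : IsRIP A (2 * r) δ)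
    (yhat e : Fin K → ℝ)
    (he : ∀ k, (e k : ℂ) = (yhat k : ℂ) - Matrix.trace (A k * ρstar))
    (U : Matrix (Fin D) (Fin r) ℂ)
    (hcrit : wGrad A yhat U = 0)
    (Pu : Matrix (Fin D) (Fin D) ℂ)
    (hPherm : Pu.IsHermitian) (hPidem : Pu * Pu = Pu)
    (hPrange : LinearMap.range Pu.mulVecLin = LinearMap.range U.mulVecLin) :
    frobNorm ((U * Uᴴ - ρstar) * Pu) ≤
      2 * δ * frobNorm (U * Uᴴ - ρstar)
        + (D : ℝ) * Real.sqrt (2 * r) / (K : ℝ) * specNorm (adjointMap A e) := by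
  have hcrit' : ((D : ℂ) / (K : ℂ)) •
      ∑ k, (Matrix.trace (A k * (U * Uᴴ)) - (yhat k : ℂ)) • (A k * U) = 0 := hcrit
  have h := main_helper hD hK hr hrD A hA ρstar hpsd hrank δ hδ0 hδ1 hRIP yhat e he U hcrit'
    Pu hPherm hPidem hPrange
  exact h
end

section
/- (RIP polarization inequality) Suppose the measurement map 𝒜 satisfies the (2r, δ)-RIP. Then for any ρ₁, ρ₂ ∈ ℂ^{D×D} each of rank at most r, |(D/K)·⟨𝒜(ρ₁), 𝒜(ρ₂)⟩ − ⟨ρ₁, ρ₂⟩| ≤ 2δ·‖ρ₁‖_F·‖ρ₂‖_F, where ⟨x, y⟩ = Σ_{k=1}^K conj(x_k)·y_k for x, y ∈ ℂ^K and ⟨ρ₁, ρ₂⟩ = trace(ρ₁^H ρ₂). -/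
open Matrix
open scoped BigOperators ComplexOrder

namespace Stmt12Aux

noncomputable def Nsq {D : ℕ} (x : Matrix (Fin D) (Fin D) ℂ) : ℝ :=
  ∑ i, ∑ j, ‖x i j‖ ^ 2

noncomputable def Ssum {D K : ℕ} (A : Fin K → Matrix (Fin D) (Fin D) ℂ)
    (x y : Matrix (Fin D) (Fin D) ℂ) : ℂ :=
  ∑ k, (starRingEnd ℂ) (Matrix.trace (A k * x)) * Matrix.trace (A k * y)

noncomputable def Psum {D : ℕ} (x y : Matrix (Fin D) (Fin D) ℂ) : ℂ :=
  ∑ j, ∑ i, (starRingEnd ℂ) (x i j) * y i j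

noncomputable def Bform {D K : ℕ} (A : Fin K → Matrix (Fin D) (Fin D) ℂ)
    (x y : Matrix (Fin D) (Fin D) ℂ) : ℂ :=
  ((D : ℂ) / (K : ℂ)) * Ssum A x y - Psum x y

lemma trace_conjT {D : ℕ} (x y : Matrix (Fin D) (Fin D) ℂ) :
    Matrix.trace (xᴴ * y) = Psum x y := by
  simp [Psum, Matrix.trace, Matrix.mul_apply, Matrix.conjTranspose_apply, Matrix.diag]

lemma Nsq_nonneg {D : ℕ} (x : Matrix (Fin D) (Fin D) ℂ) : 0 ≤ Nsq x := by
  apply Finset.sum_nonneg; intro i _; apply Finset.sum_nonneg; intro j _; positivity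

lemma frobNorm_sq {D : ℕ} (x : Matrix (Fin D) (Fin D) ℂ) :
    frobNorm x ^ 2 = Nsq x := by
  show Real.sqrt (Nsq x) ^ 2 = Nsq x
  exact Real.sq_sqrt (Nsq_nonneg x)

lemma key (t1 t2 : ℂ) :
    (starRingEnd ℂ) (t1 + t2) * (t1 + t2) - (starRingEnd ℂ) (t1 - t2) * (t1 - t2)
      - Complex.I * ((starRingEnd ℂ) (t1 + Complex.I * t2) * (t1 + Complex.I * t2)
        - (starRingEnd ℂ) (t1 - Complex.I * t2) * (t1 - Complex.I * t2))
      = 4 * ((starRingEnd ℂ) t1 * t2) := by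
  simp only [map_add, map_sub, _root_.map_mul, Complex.conj_I]
  ring_nf
  simp only [Complex.I_sq]
  ring

lemma T_add {D K : ℕ} (A : Fin K → Matrix (Fin D) (Fin D) ℂ) (k : Fin K)
    (x y : Matrix (Fin D) (Fin D) ℂ) :
    Matrix.trace (A k * (x + y)) = Matrix.trace (A k * x) + Matrix.trace (A k * y) := by
  simp [mul_add]

lemma T_sub {D K : ℕ} (A : Fin K → Matrix (Fin D) (Fin D) ℂ) (k : Fin K)
    (x y : Matrix (Fin D) (Fin D) ℂ) :
    Matrix.trace (A k * (x - y)) = Matrix.trace (A k * x) - Matrix.trace (A k * y) := by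
  simp [mul_sub]

lemma T_smul {D K : ℕ} (A : Fin K → Matrix (Fin D) (Fin D) ℂ) (k : Fin K) (c : ℂ)
    (y : Matrix (Fin D) (Fin D) ℂ) :
    Matrix.trace (A k * (c • y)) = c * Matrix.trace (A k * y) := by
  simp [Matrix.mul_smul]

lemma polarS {D K : ℕ} (A : Fin K → Matrix (Fin D) (Fin D) ℂ)
    (x y : Matrix (Fin D) (Fin D) ℂ) :
    Ssum A (x + y) (x + y) - Ssum A (x - y) (x - y)
      - Complex.I * (Ssum A (x + Complex.I • y) (x + Complex.I • y)
        - Ssum A (x - Complex.I • y) (x - Complex.I • y))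
      = 4 * Ssum A x y := by
  simp only [Ssum, ← Finset.sum_sub_distrib, Finset.mul_sum]
  refine Finset.sum_congr rfl fun k _ => ?_
  simp only [T_add, T_sub, T_smul]
  exact key _ _

lemma polarP {D : ℕ} (x y : Matrix (Fin D) (Fin D) ℂ) :
    Psum (x + y) (x + y) - Psum (x - y) (x - y)
      - Complex.I * (Psum (x + Complex.I • y) (x + Complex.I • y)
        - Psum (x - Complex.I • y) (x - Complex.I • y))
      = 4 * Psum x y := by
  simp only [Psum, ← Finset.sum_sub_distrib, Finset.mul_sum]
  refine Finset.sum_congr rfl fun j _ => ?_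
  refine Finset.sum_congr rfl fun i _ => ?_
  simp only [Matrix.add_apply, Matrix.sub_apply, Matrix.smul_apply, smul_eq_mul]
  exact key _ _

lemma polarB {D K : ℕ} (A : Fin K → Matrix (Fin D) (Fin D) ℂ)
    (x y : Matrix (Fin D) (Fin D) ℂ) :
    4 * Bform A x y = Bform A (x + y) (x + y) - Bform A (x - y) (x - y)
      - Complex.I * (Bform A (x + Complex.I • y) (x + Complex.I • y)
        - Bform A (x - Complex.I • y) (x - Complex.I • y)) := by
  have h1 := polarS A x y
  have h2 := polarP x y
  simp only [Bform]
  linear_combination -(((D : ℂ) / (K : ℂ)) * h1) + h2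

lemma parallelogram {D : ℕ} (x y : Matrix (Fin D) (Fin D) ℂ) :
    Nsq (x + y) + Nsq (x - y) + Nsq (x + Complex.I • y) + Nsq (x - Complex.I • y)
      = 4 * (Nsq x + Nsq y) := by
  simp only [Nsq, ← Finset.sum_add_distrib, Finset.mul_sum]
  refine Finset.sum_congr rfl fun i _ => ?_
  refine Finset.sum_congr rfl fun j _ => ?_
  simp only [Matrix.add_apply, Matrix.sub_apply, Matrix.smul_apply, smul_eq_mul]
  simp only [Complex.sq_norm, Complex.normSq_apply,
    Complex.add_re, Complex.add_im, Complex.sub_re, Complex.sub_im, Complex.mul_re,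
    Complex.mul_im, Complex.I_re, Complex.I_im]
  ring

lemma Ssum_self {D K : ℕ} (A : Fin K → Matrix (Fin D) (Fin D) ℂ)
    (x : Matrix (Fin D) (Fin D) ℂ) :
    Ssum A x x = ((∑ k, ‖Matrix.trace (A k * x)‖ ^ 2 : ℝ) : ℂ) := by
  rw [Ssum, Complex.ofReal_sum]
  exact Finset.sum_congr rfl fun k _ => by
    rw [Complex.conj_mul']; norm_cast

lemma Psum_self {D : ℕ} (x : Matrix (Fin D) (Fin D) ℂ) :
    Psum x x = ((Nsq x : ℝ) : ℂ) := by
  rw [Psum, Nsq, Complex.ofReal_sum, Finset.sum_comm]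
  refine Finset.sum_congr rfl fun i _ => ?_
  rw [Complex.ofReal_sum]
  exact Finset.sum_congr rfl fun j _ => by
    rw [Complex.conj_mul']; norm_cast

lemma Bform_self_abs {D K : ℕ} {A : Fin K → Matrix (Fin D) (Fin D) ℂ} {s : ℕ} {δ : ℝ}
    (hRIP : IsRIP A s δ) (x : Matrix (Fin D) (Fin D) ℂ) (hx : x.rank ≤ s) :
    ‖(Bform A x x)‖ ≤ δ * Nsq x := by
  obtain ⟨h1, h2⟩ := hRIP x hx
  rw [frobNorm_sq] at h1 h2
  have : Bform A x x = (((((D : ℝ) / (K : ℝ)) * ∑ k, ‖Matrix.trace (A k * x)‖ ^ 2)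
      - Nsq x : ℝ) : ℂ) := by
    rw [Bform, Ssum_self, Psum_self]
    push_cast
    ring
  rw [this, Complex.norm_real, Real.norm_eq_abs, abs_le]
  constructor <;> nlinarith [Nsq_nonneg x]

lemma mulVecLin_smul {D : ℕ} (c : ℂ) (x : Matrix (Fin D) (Fin D) ℂ) :
    (c • x).mulVecLin = c • x.mulVecLin := by
  ext v i
  simp [Matrix.mulVecLin, Matrix.smul_mulVec]

lemma rank_smul_le {D : ℕ} (c : ℂ) (x : Matrix (Fin D) (Fin D) ℂ) (hc : c ≠ 0) :
    (c • x).rank = x.rank := by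
  rw [Matrix.rank, Matrix.rank, mulVecLin_smul, LinearMap.range_smul _ _ hc]

lemma rank_add_le' {D : ℕ} (x y : Matrix (Fin D) (Fin D) ℂ) :
    (x + y).rank ≤ x.rank + y.rank := by
  rw [Matrix.rank, Matrix.rank, Matrix.rank, Matrix.mulVecLin_add]
  have hle : LinearMap.range (x.mulVecLin + y.mulVecLin)
      ≤ LinearMap.range x.mulVecLin ⊔ LinearMap.range y.mulVecLin := by
    rintro v ⟨w, rfl⟩
    exact Submodule.add_mem_sup (LinearMap.mem_range_self _ w) (LinearMap.mem_range_self _ w)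
  calc Module.finrank ℂ (LinearMap.range (x.mulVecLin + y.mulVecLin))
      ≤ Module.finrank ℂ ((LinearMap.range x.mulVecLin) ⊔ (LinearMap.range y.mulVecLin) :
          Submodule ℂ (Fin D → ℂ)) := Submodule.finrank_mono hle
    _ ≤ _ := Submodule.finrank_add_le_finrank_add_finrank _ _

lemma rank_sub_le' {D : ℕ} (x y : Matrix (Fin D) (Fin D) ℂ) :
    (x - y).rank ≤ x.rank + y.rank := by
  have h : x - y = x + (-1 : ℂ) • y := by
    ext i j; simp [sub_eq_add_neg]
  rw [h]
  calc (x + (-1 : ℂ) • y).rank ≤ x.rank + ((-1 : ℂ) • y).rank := rank_add_le' _ _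
    _ = x.rank + y.rank := by rw [rank_smul_le _ _ (by norm_num)]

lemma Nsq_smul {D : ℕ} (c : ℂ) (x : Matrix (Fin D) (Fin D) ℂ) :
    Nsq (c • x) = ‖c‖ ^ 2 * Nsq x := by
  simp only [Nsq, Finset.mul_sum]
  refine Finset.sum_congr rfl fun i _ => Finset.sum_congr rfl fun j _ => ?_
  simp [mul_pow]

lemma Ssum_smul {D K : ℕ} (A : Fin K → Matrix (Fin D) (Fin D) ℂ) (a b : ℂ)
    (x y : Matrix (Fin D) (Fin D) ℂ) :
    Ssum A (a • x) (b • y) = (starRingEnd ℂ) a * b * Ssum A x y := by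
  simp only [Ssum, Finset.mul_sum]
  refine Finset.sum_congr rfl fun k _ => ?_
  rw [T_smul, T_smul, _root_.map_mul]
  ring

lemma Psum_smul {D : ℕ} (a b : ℂ) (x y : Matrix (Fin D) (Fin D) ℂ) :
    Psum (a • x) (b • y) = (starRingEnd ℂ) a * b * Psum x y := by
  simp only [Psum, Finset.mul_sum]
  refine Finset.sum_congr rfl fun j _ => Finset.sum_congr rfl fun i _ => ?_
  simp only [Matrix.smul_apply, smul_eq_mul, _root_.map_mul]
  ring

lemma Bform_smul {D K : ℕ} (A : Fin K → Matrix (Fin D) (Fin D) ℂ) (a b : ℂ)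
    (x y : Matrix (Fin D) (Fin D) ℂ) :
    Bform A (a • x) (b • y) = (starRingEnd ℂ) a * b * Bform A x y := by
  rw [Bform, Bform, Ssum_smul, Psum_smul]; ring

end Stmt12Aux

namespace Stmt12Aux

lemma frobNorm_pos {D : ℕ} (x : Matrix (Fin D) (Fin D) ℂ) (hx : x ≠ 0) :
    0 < frobNorm x := by
  rw [frobNorm]
  apply Real.sqrt_pos.mpr
  rcases lt_or_eq_of_le (Nsq_nonneg x) with h | h
  · exact h
  · exfalso
    apply hx
    ext i j
    have h0 : ∀ i ∈ Finset.univ, (0 : ℝ) ≤ ∑ j, ‖x i j‖ ^ 2 := fun i _ =>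
      Finset.sum_nonneg fun j _ => by positivity
    have h1 := (Finset.sum_eq_zero_iff_of_nonneg h0).mp h.symm i (Finset.mem_univ i)
    have h2 := (Finset.sum_eq_zero_iff_of_nonneg
      (fun j _ => by positivity : ∀ j ∈ Finset.univ, (0:ℝ) ≤ ‖x i j‖ ^ 2)).mp h1 j
      (Finset.mem_univ j)
    have : ‖x i j‖ = 0 := by nlinarith [norm_nonneg (x i j)]
    simpa using this

lemma Bform_bound {D K r : ℕ} (A : Fin K → Matrix (Fin D) (Fin D) ℂ) {δ : ℝ}
    (hRIP : IsRIP A (2 * r) δ) (x y : Matrix (Fin D) (Fin D) ℂ)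
    (hx : x.rank ≤ r) (hy : y.rank ≤ r) (hNx : Nsq x = 1) (hNy : Nsq y = 1) :
    ‖(Bform A x y)‖ ≤ 2 * δ := by
  have hry : (Complex.I • y).rank = y.rank := rank_smul_le _ _ Complex.I_ne_zero
  have hrk1 : (x + y).rank ≤ 2 * r := by
    calc (x + y).rank ≤ x.rank + y.rank := rank_add_le' _ _
      _ ≤ 2 * r := by omega
  have hrk2 : (x - y).rank ≤ 2 * r := by
    calc (x - y).rank ≤ x.rank + y.rank := rank_sub_le' _ _
      _ ≤ 2 * r := by omega
  have hrk3 : (x + Complex.I • y).rank ≤ 2 * r := by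
    calc (x + Complex.I • y).rank ≤ x.rank + (Complex.I • y).rank := rank_add_le' _ _
      _ ≤ 2 * r := by rw [hry]; omega
  have hrk4 : (x - Complex.I • y).rank ≤ 2 * r := by
    calc (x - Complex.I • y).rank ≤ x.rank + (Complex.I • y).rank := rank_sub_le' _ _
      _ ≤ 2 * r := by rw [hry]; omega
  have hB1 := Bform_self_abs hRIP _ hrk1
  have hB2 := Bform_self_abs hRIP _ hrk2
  have hB3 := Bform_self_abs hRIP _ hrk3
  have hB4 := Bform_self_abs hRIP _ hrk4
  have hpar := parallelogram x y
  have h4 := polarB A x y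
  have habs : ‖(4 * Bform A x y)‖ ≤
      ‖(Bform A (x + y) (x + y))‖ + ‖(Bform A (x - y) (x - y))‖
      + ‖(Bform A (x + Complex.I • y) (x + Complex.I • y))‖
      + ‖(Bform A (x - Complex.I • y) (x - Complex.I • y))‖ := by
    rw [h4]
    calc ‖(Bform A (x + y) (x + y) - Bform A (x - y) (x - y)
          - Complex.I * (Bform A (x + Complex.I • y) (x + Complex.I • y)
            - Bform A (x - Complex.I • y) (x - Complex.I • y)))‖
        ≤ ‖(Bform A (x + y) (x + y) - Bform A (x - y) (x - y))‖
          + ‖(Complex.I * (Bform A (x + Complex.I • y) (x + Complex.I • y)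
            - Bform A (x - Complex.I • y) (x - Complex.I • y)))‖ := by
          apply norm_sub_le
      _ ≤ _ := by
          rw [norm_mul, Complex.norm_I, one_mul]
          have := norm_sub_le (Bform A (x + y) (x + y)) (Bform A (x - y) (x - y))
          have := norm_sub_le (Bform A (x + Complex.I • y) (x + Complex.I • y))
            (Bform A (x - Complex.I • y) (x - Complex.I • y))
          linarith
  have h4abs : ‖(4 * Bform A x y)‖ = 4 * ‖(Bform A x y)‖ := by
    rw [norm_mul]
    norm_num
  rw [h4abs] at habs
  have hfin : 4 * ‖(Bform A x y)‖ ≤ δ * (Nsq (x + y) + Nsq (x - y)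
      + Nsq (x + Complex.I • y) + Nsq (x - Complex.I • y)) := by linarith
  rw [show Nsq (x + y) + Nsq (x - y) + Nsq (x + Complex.I • y) + Nsq (x - Complex.I • y)
    = 4 * (Nsq x + Nsq y) from hpar, hNx, hNy] at hfin
  linarith

end Stmt12Aux

/-- RIP polarization inequality. -/
theorem stmt_12 {D K r : ℕ} (hD : 0 < D) (hK : 0 < K) (hr : 0 < r) (hrD : r ≤ D)
    (A : Fin K → Matrix (Fin D) (Fin D) ℂ) (hA : ∀ k, (A k).IsHermitian)
    (δ : ℝ) (hδ0 : 0 ≤ δ) (hδ1 : δ < 1) (hRIP : IsRIP A (2 * r) δ)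
    (ρ1 ρ2 : Matrix (Fin D) (Fin D) ℂ) (hρ1 : ρ1.rank ≤ r) (hρ2 : ρ2.rank ≤ r) :
    ‖(((D : ℂ) / (K : ℂ)) *
        (∑ k, (starRingEnd ℂ) (Matrix.trace (A k * ρ1)) * Matrix.trace (A k * ρ2))
      - Matrix.trace (ρ1ᴴ * ρ2))‖ ≤ 2 * δ * frobNorm ρ1 * frobNorm ρ2 := by
  have hgoal : ((D : ℂ) / (K : ℂ)) *
        (∑ k, (starRingEnd ℂ) (Matrix.trace (A k * ρ1)) * Matrix.trace (A k * ρ2))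
      - Matrix.trace (ρ1ᴴ * ρ2) = Stmt12Aux.Bform A ρ1 ρ2 := by
    rw [Stmt12Aux.Bform, Stmt12Aux.trace_conjT, Stmt12Aux.Ssum]
  rw [hgoal]
  by_cases h1 : ρ1 = 0
  · subst h1
    simp [Stmt12Aux.Bform, Stmt12Aux.Ssum, Stmt12Aux.Psum, frobNorm]
  by_cases h2 : ρ2 = 0
  · subst h2
    simp [Stmt12Aux.Bform, Stmt12Aux.Ssum, Stmt12Aux.Psum, frobNorm]
  set c1 := frobNorm ρ1 with hc1def
  set c2 := frobNorm ρ2 with hc2def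
  have hc1 : 0 < c1 := Stmt12Aux.frobNorm_pos ρ1 h1
  have hc2 : 0 < c2 := Stmt12Aux.frobNorm_pos ρ2 h2
  set a : ℂ := ((c1⁻¹ : ℝ) : ℂ) with hadef
  set b : ℂ := ((c2⁻¹ : ℝ) : ℂ) with hbdef
  have ha0 : a ≠ 0 := by
    simp only [hadef, ne_eq, Complex.ofReal_eq_zero]
    exact inv_ne_zero (ne_of_gt hc1)
  have hb0 : b ≠ 0 := by
    simp only [hbdef, ne_eq, Complex.ofReal_eq_zero]
    exact inv_ne_zero (ne_of_gt hc2)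
  have hNx : Stmt12Aux.Nsq (a • ρ1) = 1 := by
    rw [Stmt12Aux.Nsq_smul, ← Stmt12Aux.frobNorm_sq, hadef]
    rw [Complex.norm_real, Real.norm_eq_abs, abs_of_pos (by positivity)]
    rw [← hc1def]
    field_simp
  have hNy : Stmt12Aux.Nsq (b • ρ2) = 1 := by
    rw [Stmt12Aux.Nsq_smul, ← Stmt12Aux.frobNorm_sq, hbdef]
    rw [Complex.norm_real, Real.norm_eq_abs, abs_of_pos (by positivity)]
    rw [← hc2def]
    field_simp
  have hrx : (a • ρ1).rank ≤ r := by
    rw [Stmt12Aux.rank_smul_le _ _ ha0]; exact hρ1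
  have hry : (b • ρ2).rank ≤ r := by
    rw [Stmt12Aux.rank_smul_le _ _ hb0]; exact hρ2
  have hbound := Stmt12Aux.Bform_bound A hRIP (a • ρ1) (b • ρ2) hrx hry hNx hNy
  rw [Stmt12Aux.Bform_smul, norm_mul, norm_mul] at hbound
  have hca : ‖((starRingEnd ℂ) a)‖ = c1⁻¹ := by
    rw [Complex.norm_conj, hadef, Complex.norm_real, Real.norm_eq_abs, abs_of_pos (by positivity)]
  have hcb : ‖b‖ = c2⁻¹ := by
    rw [hbdef, Complex.norm_real, Real.norm_eq_abs, abs_of_pos (by positivity)]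
  rw [hca, hcb] at hbound
  have h := mul_le_mul_of_nonneg_left hbound (le_of_lt (mul_pos hc1 hc2))
  have he : c1 * c2 * (c1⁻¹ * c2⁻¹ * ‖(Stmt12Aux.Bform A ρ1 ρ2)‖)
      = ‖(Stmt12Aux.Bform A ρ1 ρ2)‖ := by
    field_simp
  rw [he] at h
  linarith
end
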